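/- arXiv:2003.02238 — 5 statements merged into one kernel-verified Lean document; each statement's English description precedes it below -/
import Mathlib

section
/- For any countable group G and any reasonable pointclass Γ, (Γ, E_G)-determinacy implies Γ-determinacy; that is, if every E_G-invariant set A ⊆ S^G in Γ (for S = 2 or S = ω) has determined preimage π⁻¹(A) under every enumeration-induced homeomorphism π : S^ω → S^G, then every set in Γ of sequences is determined. -/
open Filter Set

/-- The position (list of moves) consisting of the first `n` moves of the run `x`. -/
def initSeg {S : Type*} (x : ℕ → S) (n : ℕ) : List S := List.ofFn (fun i : Fin n => x i)

/-- The run `x` is compatible with player I using strategy `σ`. -/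
def FollowsStratI {S : Type*} (σ : List S → S) (x : ℕ → S) : Prop :=
  ∀ n, x (2 * n) = σ (initSeg x (2 * n))

/-- The run `x` is compatible with player II using strategy `τ`. -/
def FollowsStratII {S : Type*} (τ : List S → S) (x : ℕ → S) : Prop :=
  ∀ n, x (2 * n + 1) = τ (initSeg x (2 * n + 1))

/-- The game with payoff set `A` (for player I) is determined. -/
def GameDetermined {S : Type*} (A : Set (ℕ → S)) : Prop :=
  (∃ σ : List S → S, ∀ x, FollowsStratI σ x → x ∈ A) ∨
  (∃ τ : List S → S, ∀ x, FollowsStratII τ x → x ∉ A)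

/-- A pointclass: a collection of subsets of topological (in particular Polish) spaces closed
under continuous preimages. -/
structure Pointclass : Type 1 where
  mem : ∀ (X : Type) [TopologicalSpace X], Set (Set X)
  continuous_preimage : ∀ (X Y : Type) [TopologicalSpace X] [TopologicalSpace Y]
    (f : X → Y), Continuous f → ∀ A : Set Y, A ∈ mem Y → f ⁻¹' A ∈ mem X

/-- `sigmaLevel X n` is the pointclass `Σ⁰_{n+1}` of subsets of `X`. -/
def sigmaLevel (X : Type) [TopologicalSpace X] : ℕ → Set (Set X)
  | 0 => {s | IsOpen s}
  | (n + 1) => {s | ∃ f : ℕ → Set X, (∀ k, (f k)ᶜ ∈ sigmaLevel X n) ∧ s = ⋃ k, f k}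

/-- `Δ⁰₆` sets: both `Σ⁰₆` and `Π⁰₆`. -/
def IsDelta06 {X : Type} [TopologicalSpace X] (s : Set X) : Prop :=
  s ∈ sigmaLevel X 5 ∧ sᶜ ∈ sigmaLevel X 5

/-- A function is `Δ⁰₆`-measurable if preimages of open sets are `Δ⁰₆`. -/
def Delta06Measurable {X Y : Type} [TopologicalSpace X] [TopologicalSpace Y] (f : X → Y) : Prop :=
  ∀ U : Set Y, IsOpen U → IsDelta06 (f ⁻¹' U)

/-- A reasonable pointclass: closed under unions and intersections with `Δ⁰₆` sets and under
substitution by `Δ⁰₆`-measurable functions. -/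
structure Reasonable (Γ : Pointclass) : Prop where
  union_delta : ∀ (X : Type) [TopologicalSpace X] (A B : Set X),
    A ∈ Γ.mem X → IsDelta06 B → A ∪ B ∈ Γ.mem X
  inter_delta : ∀ (X : Type) [TopologicalSpace X] (A B : Set X),
    A ∈ Γ.mem X → IsDelta06 B → A ∩ B ∈ Γ.mem X
  delta_subst : ∀ (X Y : Type) [TopologicalSpace X] [TopologicalSpace Y] (f : X → Y),
    Delta06Measurable f → ∀ A : Set Y, A ∈ Γ.mem Y → f ⁻¹' A ∈ Γ.mem X

/-- `Γ`-determinacy for games with moves in `S`: every `Γ` subset of `S^ω` is determined. -/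
def GammaDetOn (Γ : Pointclass) (S : Type) [TopologicalSpace S] : Prop :=
  ∀ A : Set (ℕ → S), A ∈ Γ.mem (ℕ → S) → GameDetermined A

/-- The orbit equivalence relation of the left shift action of `G` on `S^G`:
`y = g · x` where `(g · x)(h) = x (g⁻¹ h)`. -/
def ShiftRel (G : Type*) {S : Type*} [Group G] (x y : G → S) : Prop :=
  ∃ g : G, ∀ h : G, y h = x (g⁻¹ * h)

/-- `(Γ, E_G)`-determinacy for the shift action of `G` on `S^G`: every `E_G`-invariant `Γ`
subset of `S^G` has determined preimage under the homeomorphism `S^ω ≃ S^G` induced by any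
enumeration `π` of `G`. -/
def GammaShiftDet (Γ : Pointclass) (G : Type) [Group G] (S : Type) [TopologicalSpace S] : Prop :=
  ∀ A : Set (G → S), A ∈ Γ.mem (G → S) →
    (∀ x y : G → S, ShiftRel G x y → (x ∈ A ↔ y ∈ A)) →
    ∀ π : ℕ ≃ G, GameDetermined {x : ℕ → S | (fun g => x (π.symm g)) ∈ A}





section Hier
variable {X : Type} [TopologicalSpace X]

/-- every open set is a countable union of closed sets (pseudometrizable case). -/
theorem open_fsigma [TopologicalSpace.PseudoMetrizableSpace X] {U : Set X} (hU : IsOpen U) :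
    ∃ F : ℕ → Set X, (∀ k, IsClosed (F k)) ∧ U = ⋃ k, F k := by
  letI := TopologicalSpace.pseudoMetrizableSpacePseudoMetric X
  have h : IsGδ Uᶜ := (isClosed_compl_iff.mpr hU).isGδ
  obtain ⟨T, hTo, hTc, hTe⟩ := h
  rcases T.eq_empty_or_nonempty with rfl | hne
  · refine ⟨fun _ => ∅, fun _ => isClosed_empty, ?_⟩
    simp only [Set.sInter_empty] at hTe
    have : U = ∅ := by
      have := congrArg compl hTe; simpa using this
    simp [this]
  · obtain ⟨f, hf⟩ := hTc.exists_eq_range hne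
    refine ⟨fun k => (f k)ᶜ, fun k => ?_, ?_⟩
    · exact isClosed_compl_iff.mpr (hTo _ (by rw [hf]; exact ⟨k, rfl⟩))
    · have : Uᶜ = ⋂ k, f k := by rw [hTe, hf]; simp [Set.sInter_range]
      have := congrArg compl this
      simpa [Set.compl_iInter] using this

theorem closed_mem_sigma1 {s : Set X} (hs : IsClosed s) : s ∈ sigmaLevel X 1 :=
  ⟨fun _ => s, fun _ => by simpa [sigmaLevel] using hs.isOpen_compl, (Set.iUnion_const s).symm⟩

theorem iUnion_closed_mem_sigma1 {F : ℕ → Set X} (hF : ∀ k, IsClosed (F k)) :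
    (⋃ k, F k) ∈ sigmaLevel X 1 :=
  ⟨F, fun k => by simpa [sigmaLevel] using (hF k).isOpen_compl, rfl⟩

variable (hFσ : ∀ U : Set X, IsOpen U → ∃ F : ℕ → Set X, (∀ k, IsClosed (F k)) ∧ U = ⋃ k, F k)
include hFσ

theorem open_mem_sigma1 {s : Set X} (hs : IsOpen s) : s ∈ sigmaLevel X 1 := by
  obtain ⟨F, h1, h2⟩ := hFσ s hs
  exact h2 ▸ iUnion_closed_mem_sigma1 h1

theorem sigma_mono {n : ℕ} {s : Set X} (hs : s ∈ sigmaLevel X n) : s ∈ sigmaLevel X (n + 1) := by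
  induction n generalizing s with
  | zero => exact open_mem_sigma1 hFσ hs
  | succ n ih =>
    obtain ⟨f, h1, rfl⟩ := hs
    exact ⟨f, fun k => ih (h1 k), rfl⟩

theorem sigma_mono_le {n m : ℕ} (hnm : n ≤ m) {s : Set X} (hs : s ∈ sigmaLevel X n) :
    s ∈ sigmaLevel X m := by
  induction m with
  | zero => exact (Nat.le_zero.mp hnm) ▸ hs
  | succ m ih =>
    rcases Nat.lt_or_ge n (m+1) with h | h
    · exact sigma_mono hFσ (ih (Nat.lt_succ_iff.mp h))
    · exact (Nat.le_antisymm hnm h) ▸ hs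

omit hFσ in
theorem compl_bump {n : ℕ} {s : Set X} (hs : s ∈ sigmaLevel X n) : sᶜ ∈ sigmaLevel X (n + 1) :=
  ⟨fun _ => sᶜ, fun _ => by simpa using hs, (Set.iUnion_const sᶜ).symm⟩

omit hFσ in
theorem sigma_iUnion_nat {n : ℕ} {s : ℕ → Set X} (hs : ∀ i, s i ∈ sigmaLevel X (n + 1)) :
    (⋃ i, s i) ∈ sigmaLevel X (n + 1) := by
  choose f hf hfe using hs
  let e := Denumerable.eqv (ℕ × ℕ)
  refine ⟨fun k => f (e.symm k).1 (e.symm k).2, fun k => hf _ _, ?_⟩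
  ext x
  simp only [Set.mem_iUnion]
  constructor
  · rintro ⟨i, hx⟩
    rw [hfe i] at hx
    obtain ⟨j, hj⟩ := Set.mem_iUnion.mp hx
    exact ⟨e ⟨i, j⟩, by simpa using hj⟩
  · rintro ⟨k, hk⟩
    exact ⟨(e.symm k).1, by rw [hfe]; exact Set.mem_iUnion.mpr ⟨_, hk⟩⟩

omit hFσ in
theorem univ_empty_mem_sigma (n : ℕ) :
    (Set.univ : Set X) ∈ sigmaLevel X n ∧ (∅ : Set X) ∈ sigmaLevel X n := by
  induction n with
  | zero => exact ⟨isOpen_univ, isOpen_empty⟩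
  | succ n ih =>
    exact ⟨⟨fun _ => Set.univ, fun _ => by simpa using ih.2, (Set.iUnion_const _).symm⟩,
      ⟨fun _ => ∅, fun _ => by simpa using ih.1, (Set.iUnion_const _).symm⟩⟩

omit hFσ in
theorem sigma_iUnion_countable {ι : Type} [Countable ι] {n : ℕ} {s : ι → Set X}
    (hs : ∀ i, s i ∈ sigmaLevel X (n + 1)) : (⋃ i, s i) ∈ sigmaLevel X (n + 1) := by
  rcases isEmpty_or_nonempty ι with h | h
  · have : (⋃ i, s i) = ⋃ _ : ℕ, (∅ : Set X) := by simp
    rw [this]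
    exact sigma_iUnion_nat (fun _ => ⟨fun _ => ∅, fun _ => by simpa using (univ_empty_mem_sigma n).1,
      (Set.iUnion_const _).symm⟩)
  · obtain ⟨g, hg⟩ := exists_surjective_nat ι
    have : (⋃ i, s i) = ⋃ k : ℕ, s (g k) := by
      ext x; simp only [Set.mem_iUnion]
      exact ⟨fun ⟨i, hi⟩ => by obtain ⟨k, rfl⟩ := hg i; exact ⟨k, hi⟩, fun ⟨k, hk⟩ => ⟨g k, hk⟩⟩
    rw [this]
    exact sigma_iUnion_nat (fun k => hs (g k))

theorem sigma1_union {s t : Set X} (hs : s ∈ sigmaLevel X 1) (ht : t ∈ sigmaLevel X 1) :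
    s ∪ t ∈ sigmaLevel X 1 := by
  obtain ⟨f, hf, rfl⟩ := hs
  obtain ⟨g, hg, rfl⟩ := ht
  refine ⟨fun k => f k ∪ g k, fun k => ?_, ?_⟩
  · have h1 : IsClosed (f k) := by have := hf k; simpa [sigmaLevel] using this
    have h2 : IsClosed (g k) := by have := hg k; simpa [sigmaLevel] using this
    simpa [sigmaLevel] using (h1.union h2).isOpen_compl
  · exact (Set.iUnion_union_distrib f g).symm

theorem sigma2_inter_closed {s F : Set X} (hs : s ∈ sigmaLevel X 2) (hF : IsClosed F) :
    s ∩ F ∈ sigmaLevel X 2 := by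
  obtain ⟨f, hf, rfl⟩ := hs
  refine ⟨fun k => f k ∩ F, fun k => ?_, by rw [Set.iUnion_inter]⟩
  rw [Set.compl_inter]
  exact sigma1_union hFσ (hf k) (open_mem_sigma1 hFσ hF.isOpen_compl)

end Hier








section Runs
variable {S : Type*}

theorem initSeg_zero (x : ℕ → S) : initSeg x 0 = [] := rfl

theorem initSeg_succ (x : ℕ → S) (n : ℕ) :
    initSeg x (n + 1) = (initSeg x n).concat (x n) := by
  unfold initSeg
  rw [List.ofFn_succ']
  rfl

theorem initSeg_length (x : ℕ → S) (n : ℕ) : (initSeg x n).length = n := by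
  simp [initSeg]

theorem initSeg_getD (x : ℕ → S) {i n : ℕ} (h : i < n) (d : S) :
    (initSeg x n).getD i d = x i := by
  rw [List.getD_eq_getElem _ _ (by simpa [initSeg_length] using h)]
  simp [initSeg]

/-- build a run where even moves are given by `fI` (a function of position and history)
and odd moves by `fII`. -/
def mkHist (fI fII : ℕ → List S → S) : ℕ → List S
  | 0 => []
  | n + 1 => (mkHist fI fII n).concat
      (if n % 2 = 0 then fI n (mkHist fI fII n) else fII n (mkHist fI fII n))

def mkRun (fI fII : ℕ → List S → S) (n : ℕ) : S :=
  if n % 2 = 0 then fI n (mkHist fI fII n) else fII n (mkHist fI fII n)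

theorem initSeg_mkRun (fI fII : ℕ → List S → S) (n : ℕ) :
    initSeg (mkRun fI fII) n = mkHist fI fII n := by
  induction n with
  | zero => rfl
  | succ n ih => rw [initSeg_succ, ih, mkHist, mkRun]

theorem mkRun_follows_I (σ : List S → S) (fII : ℕ → List S → S) :
    FollowsStratI σ (mkRun (fun _ h => σ h) fII) := by
  intro n
  rw [mkRun, if_pos (by omega), initSeg_mkRun]

theorem mkRun_follows_II (fI : ℕ → List S → S) (τ : List S → S) :
    FollowsStratII τ (mkRun fI (fun _ h => τ h)) := by
  intro n
  rw [mkRun, if_neg (by omega), initSeg_mkRun]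

theorem mkRun_even (fI fII : ℕ → List S → S) (n : ℕ) (h : n % 2 = 0) :
    mkRun fI fII n = fI n (mkHist fI fII n) := if_pos h

theorem mkRun_odd (fI fII : ℕ → List S → S) (n : ℕ) (h : n % 2 = 1) :
    mkRun fI fII n = fII n (mkHist fI fII n) := if_neg (by omega)

/-- two mkHists agree if the move functions agree below the length. -/
theorem mkHist_congr {fI fI' fII fII' : ℕ → List S → S} {N : ℕ}
    (hI : ∀ n < N, n % 2 = 0 → ∀ h, fI n h = fI' n h)
    (hII : ∀ n < N, n % 2 = 1 → ∀ h, fII n h = fII' n h) :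
    ∀ n ≤ N, mkHist fI fII n = mkHist fI' fII' n := by
  intro n hn
  induction n with
  | zero => rfl
  | succ n ih =>
    have h1 := ih (by omega)
    rw [mkHist, mkHist, h1]
    congr 1
    by_cases h : n % 2 = 0
    · rw [if_pos h, if_pos h, hI n (by omega) h]
    · rw [if_neg h, if_neg h, hII n (by omega) (by omega)]

end Runs


section Enum
variable {G : Type} [Group G] [Countable G] [Infinite G]

noncomputable local instance : DecidableEq G := Classical.decEq G

noncomputable def e0 (G : Type) [Group G] [Countable G] [Infinite G] : ℕ ≃ G :=
  Classical.choice nonempty_equiv_of_countable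

noncomputable def e1 (G : Type) [Group G] [Countable G] [Infinite G] :
    ℕ ≃ {g : G // g ≠ 1} := by
  haveI : Infinite {g : G // g ≠ 1} := by
    have h : ({1} : Set G)ᶜ.Infinite := (Set.finite_singleton 1).infinite_compl
    haveI := h.to_subtype
    exact Infinite.of_injective (fun x : ↥(({1} : Set G)ᶜ) => (⟨x.1, x.2⟩ : {g : G // g ≠ 1}))
      (by rintro ⟨a, ha⟩ ⟨b, hb⟩ hab; simpa using congrArg Subtype.val hab)
  exact Classical.choice nonempty_equiv_of_countable

noncomputable def gg (G : Type) [Group G] [Countable G] [Infinite G] (i : ℕ) : G := (e1 G i).1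

theorem gg_ne (i : ℕ) : gg G i ≠ 1 := (e1 G i).2

theorem gg_surj {g : G} (hg : g ≠ 1) : ∃ i, gg G i = g :=
  ⟨(e1 G).symm ⟨g, hg⟩, by simp [gg]⟩

theorem exists_blk (u : Finset G) (g x : G) (hg : g ≠ 1) :
    ∃ L : List G, L.length = 6 ∧ L.Nodup ∧ (∀ z ∈ L, z ∉ u) ∧
      L.getD 1 1 = g * L.getD 0 1 ∧ L.getD 3 1 = g * L.getD 2 1 ∧
      (L.getD 4 1 = x ∨ x ∈ u) := by
  classical
  obtain ⟨a, ha⟩ := Infinite.exists_notMem_finset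
    (u ∪ u.image (g⁻¹ * ·) ∪ {x, g⁻¹ * x})
  simp only [Finset.mem_union, Finset.mem_image, Finset.mem_insert, Finset.mem_singleton,
    not_or, not_exists, not_and] at ha
  obtain ⟨⟨hau, hagu⟩, hax, hagx⟩ := ha
  have hga_u : g * a ∉ u := fun h => hagu (g * a) h (by group)
  have hga_x : g * a ≠ x := fun h => hagx (by rw [← h]; group)
  have haga : a ≠ g * a := by
    intro h; exact hg ((right_eq_mul).mp h)
  obtain ⟨d, hd⟩ := Infinite.exists_notMem_finset
    (u ∪ u.image (g⁻¹ * ·) ∪ {x, g⁻¹ * x, a, g * a, g⁻¹ * a, g⁻¹ * (g * a)})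
  simp only [Finset.mem_union, Finset.mem_image, Finset.mem_insert, Finset.mem_singleton,
    not_or, not_exists, not_and] at hd
  obtain ⟨⟨hdu, hdgu⟩, hdx, hdgx, hda, hdga, hdia, hdiga⟩ := hd
  have hgd_u : g * d ∉ u := fun h => hdgu (g * d) h (by group)
  have hgd_x : g * d ≠ x := fun h => hdgx (by rw [← h]; group)
  have hdgd : d ≠ g * d := fun h => hg ((right_eq_mul).mp h)
  have hgd_a : g * d ≠ a := fun h => hdia (by rw [← h]; group)
  have hgd_ga : g * d ≠ g * a := fun h => hda (mul_left_cancel h)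
  -- choose e
  by_cases hx : x ∈ u
  · obtain ⟨e, he⟩ := Infinite.exists_notMem_finset (u ∪ {a, g * a, d, g * d})
    simp only [Finset.mem_union, Finset.mem_insert, Finset.mem_singleton, not_or] at he
    obtain ⟨heu, hea, hega, hed, hegd⟩ := he
    obtain ⟨f, hf⟩ := Infinite.exists_notMem_finset (u ∪ {a, g * a, d, g * d, e})
    simp only [Finset.mem_union, Finset.mem_insert, Finset.mem_singleton, not_or] at hf
    obtain ⟨hfu, hfa, hfga, hfd, hfgd, hfe⟩ := hf
    refine ⟨[a, g * a, d, g * d, e, f], rfl, ?_, ?_, rfl, rfl, Or.inr hx⟩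
    · simp only [List.nodup_cons, List.mem_cons, List.mem_singleton, List.not_mem_nil,
        List.nodup_nil, or_false, not_or]
      exact ⟨⟨haga, (Ne.symm hda), (Ne.symm hgd_a), (Ne.symm hea), (Ne.symm hfa)⟩,
        ⟨(Ne.symm hdga), (Ne.symm hgd_ga), (Ne.symm hega), (Ne.symm hfga)⟩,
        ⟨hdgd, (Ne.symm hed), (Ne.symm hfd)⟩, ⟨(Ne.symm hegd), (Ne.symm hfgd)⟩, (Ne.symm hfe), not_false, trivial⟩
    · intro z hz
      simp only [List.mem_cons, List.mem_singleton, List.not_mem_nil, or_false] at hz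
      rcases hz with rfl | rfl | rfl | rfl | rfl | rfl
      exacts [hau, hga_u, hdu, hgd_u, heu, hfu]
  · obtain ⟨f, hf⟩ := Infinite.exists_notMem_finset (u ∪ {a, g * a, d, g * d, x})
    simp only [Finset.mem_union, Finset.mem_insert, Finset.mem_singleton, not_or] at hf
    obtain ⟨hfu, hfa, hfga, hfd, hfgd, hfx⟩ := hf
    refine ⟨[a, g * a, d, g * d, x, f], rfl, ?_, ?_, rfl, rfl, Or.inl rfl⟩
    · simp only [List.nodup_cons, List.mem_cons, List.mem_singleton, List.not_mem_nil,
        List.nodup_nil, or_false, not_or]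
      exact ⟨⟨haga, (Ne.symm hda), (Ne.symm hgd_a), (Ne.symm hax) ∘ Eq.symm, (Ne.symm hfa)⟩,
        ⟨(Ne.symm hdga), (Ne.symm hgd_ga), hga_x, (Ne.symm hfga)⟩,
        ⟨hdgd, hdx, (Ne.symm hfd)⟩, ⟨hgd_x, (Ne.symm hfgd)⟩, (Ne.symm hfx), not_false, trivial⟩
    · intro z hz
      simp only [List.mem_cons, List.mem_singleton, List.not_mem_nil, or_false] at hz
      rcases hz with rfl | rfl | rfl | rfl | rfl | rfl
      exacts [hau, hga_u, hdu, hgd_u, hx, hfu]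

noncomputable def chain (G : Type) [Group G] [Countable G] [Infinite G] :
    ℕ → List G × Finset G
  | 0 =>
    letI := Classical.decEq G
    let L := (exists_blk (∅ : Finset G) (gg G 0) (e0 G 0) (gg_ne 0)).choose
    (L, ∅ ∪ L.toFinset)
  | i + 1 =>
    letI := Classical.decEq G
    let u := (chain G i).2
    let L := (exists_blk u (gg G (i + 1)) (e0 G (i + 1)) (gg_ne (i + 1))).choose
    (L, u ∪ L.toFinset)

noncomputable def blkL (G : Type) [Group G] [Countable G] [Infinite G] (i : ℕ) : List G :=
  (chain G i).1

noncomputable def usedTo (G : Type) [Group G] [Countable G] [Infinite G] (i : ℕ) : Finset G :=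
  (chain G i).2

noncomputable def prevU (G : Type) [Group G] [Countable G] [Infinite G] : ℕ → Finset G
  | 0 => ∅
  | i + 1 => usedTo G i

theorem blk_spec (i : ℕ) :
    (blkL G i).length = 6 ∧ (blkL G i).Nodup ∧ (∀ z ∈ blkL G i, z ∉ prevU G i) ∧
      (blkL G i).getD 1 1 = gg G i * (blkL G i).getD 0 1 ∧
      (blkL G i).getD 3 1 = gg G i * (blkL G i).getD 2 1 ∧
      ((blkL G i).getD 4 1 = e0 G i ∨ e0 G i ∈ prevU G i) := by
  cases i with
  | zero => exact (exists_blk (∅ : Finset G) (gg G 0) (e0 G 0) (gg_ne 0)).choose_spec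
  | succ i =>
    exact (exists_blk (usedTo G i) (gg G (i + 1)) (e0 G (i + 1)) (gg_ne (i + 1))).choose_spec

theorem usedTo_eq (i : ℕ) : usedTo G i = prevU G i ∪ (blkL G i).toFinset := by
  cases i with
  | zero => rfl
  | succ i => rfl

theorem blk_length (i : ℕ) : (blkL G i).length = 6 := (blk_spec i).1

theorem blk_sub_used {z : G} {i : ℕ} (h : z ∈ blkL G i) : z ∈ usedTo G i := by
  rw [usedTo_eq, Finset.mem_union]; exact Or.inr (List.mem_toFinset.mpr h)

theorem used_mono {i j : ℕ} (h : i ≤ j) : usedTo G i ⊆ usedTo G j := by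
  induction j with
  | zero => rw [Nat.le_zero.mp h]
  | succ j ih =>
    rcases Nat.lt_or_ge i (j + 1) with h' | h'
    · refine (ih (by omega)).trans ?_
      rw [usedTo_eq (G := G) (j + 1)]
      exact Finset.subset_union_left
    · rw [Nat.le_antisymm h h']

theorem e0_mem_used (i : ℕ) : e0 G i ∈ usedTo G i := by
  rcases (blk_spec (G := G) i).2.2.2.2.2 with h | h
  · refine blk_sub_used ?_
    have hl : (4 : ℕ) < (blkL G i).length := by rw [blk_length]; omega
    rw [List.getD_eq_getElem _ _ hl] at h
    exact h ▸ List.getElem_mem hl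
  · cases i with
    | zero => simp [prevU] at h
    | succ i =>
      exact used_mono (Nat.le_succ i) h

theorem blk_disjoint {i j : ℕ} (hij : i < j) {z : G} (hi : z ∈ blkL G i) (hj : z ∈ blkL G j) :
    False := by
  obtain ⟨j, rfl⟩ : ∃ k, j = k + 1 := ⟨j - 1, by omega⟩
  have h1 : z ∈ usedTo G j := used_mono (by omega) (blk_sub_used hi)
  exact (blk_spec (G := G) (j + 1)).2.2.1 z hj h1

theorem mem_used_iff {z : G} {i : ℕ} : z ∈ usedTo G i ↔ ∃ j ≤ i, z ∈ blkL G j := by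
  induction i with
  | zero =>
    rw [usedTo_eq]
    simp only [prevU, Finset.empty_union, List.mem_toFinset]
    constructor
    · exact fun h => ⟨0, le_refl 0, h⟩
    · rintro ⟨j, hj, h⟩; rwa [Nat.le_zero.mp hj] at h
  | succ i ih =>
    rw [usedTo_eq]
    simp only [prevU, Finset.mem_union, List.mem_toFinset, ih]
    constructor
    · rintro (⟨j, hj, h⟩ | h)
      · exact ⟨j, by omega, h⟩
      · exact ⟨i + 1, le_refl _, h⟩
    · rintro ⟨j, hj, h⟩
      rcases Nat.lt_or_ge j (i + 1) with h' | h'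
      · exact Or.inl ⟨j, by omega, h⟩
      · rw [Nat.le_antisymm hj h'] at h; exact Or.inr h

/-! ### position arithmetic -/

def slt (n : ℕ) : ℕ :=
  if n % 4 = 0 then (if (n / 4) % 3 = 2 then 3 else (n / 4) % 3)
  else if n % 4 = 1 then 2 else n % 4 + 2
def stg (n : ℕ) : ℕ := if n % 4 = 0 then (n / 4) / 3 else n / 4
def posOf (j s : ℕ) : ℕ :=
  if s = 0 then 4 * (3 * j) else if s = 1 then 4 * (3 * j + 1) else if s = 2 then 4 * j + 1
  else if s = 3 then 4 * (3 * j + 2) else if s = 4 then 4 * j + 2 else 4 * j + 3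

theorem slt_lt (n : ℕ) : slt n < 6 := by unfold slt; split <;> split <;> omega

theorem posOf0 (j : ℕ) : posOf j 0 = 4 * (3 * j) := by norm_num [posOf]
theorem posOf1 (j : ℕ) : posOf j 1 = 4 * (3 * j + 1) := by norm_num [posOf]
theorem posOf2 (j : ℕ) : posOf j 2 = 4 * j + 1 := by norm_num [posOf]
theorem posOf3 (j : ℕ) : posOf j 3 = 4 * (3 * j + 2) := by norm_num [posOf]
theorem posOf4 (j : ℕ) : posOf j 4 = 4 * j + 2 := by norm_num [posOf]
theorem posOf5 (j : ℕ) : posOf j 5 = 4 * j + 3 := by norm_num [posOf]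

theorem stg_posOf (j s : ℕ) (h : s < 6) : stg (posOf j s) = j := by
  rcases (by omega : s = 0 ∨ s = 1 ∨ s = 2 ∨ s = 3 ∨ s = 4 ∨ s = 5) with
    rfl | rfl | rfl | rfl | rfl | rfl <;>
  rw [stg] <;>
  simp only [posOf0, posOf1, posOf2, posOf3, posOf4, posOf5] <;> split_ifs <;> omega

theorem slt_posOf (j s : ℕ) (h : s < 6) : slt (posOf j s) = s := by
  rcases (by omega : s = 0 ∨ s = 1 ∨ s = 2 ∨ s = 3 ∨ s = 4 ∨ s = 5) with
    rfl | rfl | rfl | rfl | rfl | rfl <;>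
  rw [slt] <;>
  simp only [posOf0, posOf1, posOf2, posOf3, posOf4, posOf5] <;> split_ifs <;> omega

theorem posOf_stg_slt (n : ℕ) : posOf (stg n) (slt n) = n := by
  rw [stg, slt]
  rcases (by omega : n % 4 = 0 ∨ n % 4 = 1 ∨ n % 4 = 2 ∨ n % 4 = 3) with h | h | h | h <;>
    rcases (by omega : n / 4 % 3 = 0 ∨ n / 4 % 3 = 1 ∨ n / 4 % 3 = 2) with h2 | h2 | h2 <;>
      simp only [h, h2] <;> norm_num [posOf] <;> omega


noncomputable def eta (G : Type) [Group G] [Countable G] [Infinite G] (n : ℕ) : G :=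
  (blkL G (stg n)).getD (slt n) 1

theorem eta_eq_getElem (n : ℕ) :
    eta G n = (blkL G (stg n))[slt n]'(by rw [blk_length]; exact slt_lt n) :=
  List.getD_eq_getElem _ _ _

theorem eta_posOf (i s : ℕ) (h : s < 6) : eta G (posOf i s) = (blkL G i).getD s 1 := by
  unfold eta; rw [stg_posOf i s h, slt_posOf i s h]

theorem eta_injective : Function.Injective (eta G) := by
  intro m n hmn
  rw [eta_eq_getElem, eta_eq_getElem] at hmn
  rcases Nat.lt_trichotomy (stg m) (stg n) with h | h | h
  · exact absurd hmn (by
      intro he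
      exact blk_disjoint h (he ▸ List.getElem_mem _) (List.getElem_mem _))
  · rw [h] at hmn
    have := ((blk_spec (G := G) (stg n)).2.1.getElem_inj_iff).mp hmn
    calc m = posOf (stg m) (slt m) := (posOf_stg_slt m).symm
    _ = posOf (stg n) (slt n) := by rw [h, this]
    _ = n := posOf_stg_slt n
  · exact absurd hmn.symm (by
      intro he
      exact blk_disjoint h (he ▸ List.getElem_mem _) (List.getElem_mem _))

theorem eta_surjective : Function.Surjective (eta G) := by
  intro z
  have hz : z ∈ usedTo G ((e0 G).symm z) := by
    have := e0_mem_used (G := G) ((e0 G).symm z)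
    rwa [Equiv.apply_symm_apply] at this
  obtain ⟨j, _, hj⟩ := mem_used_iff.mp hz
  obtain ⟨s, hs, hsz⟩ := List.getElem_of_mem hj
  have hs6 : s < 6 := by rw [blk_length] at hs; exact hs
  refine ⟨posOf j s, ?_⟩
  rw [eta_posOf j s hs6, List.getD_eq_getElem _ _ hs]
  exact hsz

noncomputable def piG (G : Type) [Group G] [Countable G] [Infinite G] : ℕ ≃ G :=
  Equiv.ofBijective (eta G) ⟨eta_injective, eta_surjective⟩

theorem piG_apply (n : ℕ) : piG G n = eta G n := rfl

/-! ### components -/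

noncomputable def aG (G : Type) [Group G] [Countable G] [Infinite G] (i : ℕ) : G :=
  (blkL G i).getD 0 1
noncomputable def dG (G : Type) [Group G] [Countable G] [Infinite G] (i : ℕ) : G :=
  (blkL G i).getD 2 1


theorem eta_pat0 (i : ℕ) : eta G (4 * (3 * i)) = aG G i := by
  have h := eta_posOf (G := G) i 0 (by omega)
  rwa [posOf0] at h

theorem eta_pat1 (i : ℕ) : eta G (4 * (3 * i + 1)) = gg G i * aG G i := by
  have h := eta_posOf (G := G) i 1 (by omega)
  rw [posOf1] at h
  rw [h]
  exact (blk_spec i).2.2.2.1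

theorem eta_pat2 (i : ℕ) : eta G (4 * (3 * i + 2)) = gg G i * dG G i := by
  have h := eta_posOf (G := G) i 3 (by omega)
  rw [posOf3] at h
  rw [h]
  exact (blk_spec i).2.2.2.2.1

theorem eta_junk (i : ℕ) : eta G (4 * i + 1) = dG G i := by
  have h := eta_posOf (G := G) i 2 (by omega)
  rwa [posOf2] at h

end Enum


section Fsigma
variable {I S : Type} [Countable I] [Countable S] [TopologicalSpace S] [DiscreteTopology S]

theorem open_fsigma_pi {U : Set (I → S)} (hU : IsOpen U) :
    ∃ F : ℕ → Set (I → S), (∀ k, IsClosed (F k)) ∧ U = ⋃ k, F k := by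
  classical
  set P := Σ J : Finset I, ({ i // i ∈ J } → S) with hP
  let cyl : P → Set (I → S) := fun p => {y | ∀ i (h : i ∈ p.1), y i = p.2 ⟨i, h⟩}
  have cyl_closed : ∀ p, IsClosed (cyl p) := by
    intro p
    have : cyl p = ⋂ i, ⋂ (h : i ∈ p.1), {y : I → S | y i = p.2 ⟨i, h⟩} := by
      ext y; simp [cyl]
    rw [this]
    exact isClosed_iInter fun i => isClosed_iInter fun h =>
      isClosed_eq (continuous_apply i) continuous_const
  have hsub : ∀ x ∈ U, ∃ p : P, x ∈ cyl p ∧ cyl p ⊆ U := by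
    intro x hx
    obtain ⟨J, u, hu, hpi⟩ := isOpen_pi_iff.mp hU x hx
    refine ⟨⟨J, fun i => x i.1⟩, fun i h => rfl, ?_⟩
    intro y hy
    apply hpi
    intro i hi
    have := hy i hi
    rw [this]
    exact (hu i hi).2
  by_cases hne : ∃ p : P, cyl p ⊆ U
  · have : Nonempty {p : P // cyl p ⊆ U} := ⟨⟨hne.choose, hne.choose_spec⟩⟩
    obtain ⟨f, hf⟩ := exists_surjective_nat {p : P // cyl p ⊆ U}
    refine ⟨fun k => cyl (f k).1, fun k => cyl_closed _, ?_⟩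
    ext x
    constructor
    · intro hx
      obtain ⟨p, hp1, hp2⟩ := hsub x hx
      obtain ⟨k, hk⟩ := hf ⟨p, hp2⟩
      exact Set.mem_iUnion.mpr ⟨k, by rw [hk]; exact hp1⟩
    · intro hx
      obtain ⟨k, hk⟩ := Set.mem_iUnion.mp hx
      exact (f k).2 hk
  · refine ⟨fun _ => ∅, fun _ => isClosed_empty, ?_⟩
    ext x
    simp only [Set.mem_iUnion, Set.mem_empty_iff_false, exists_false, iff_false]
    intro hx
    obtain ⟨p, _, hp2⟩ := hsub x hx
    exact hne ⟨p, hp2⟩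

end Fsigma

section Level2Union
variable {X : Type} [TopologicalSpace X]

theorem sigma_union_level {n : ℕ} {s t : Set X} (hs : s ∈ sigmaLevel X (n + 1))
    (ht : t ∈ sigmaLevel X (n + 1)) : s ∪ t ∈ sigmaLevel X (n + 1) := by
  have h : s ∪ t = ⋃ b : Bool, (if b then s else t) := by
    ext x
    simp only [Set.mem_union, Set.mem_iUnion]
    constructor
    · rintro (h | h)
      exacts [⟨true, by simpa⟩, ⟨false, by simpa⟩]
    · rintro ⟨b, hb⟩
      cases b
      · exact Or.inr (by simpa using hb)
      · exact Or.inl (by simpa using hb)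
  rw [h]
  exact sigma_iUnion_countable fun b => by cases b <;> simpa

end Level2Union

section Main
variable (G : Type) [Group G] [Countable G] [Infinite G]
variable (S : Type) [TopologicalSpace S] [DiscreteTopology S] [Countable S] (s0 s1 : S)

def bSS (k : ℕ) : S := if k % 3 = 1 then s1 else s0

noncomputable def CC : Set (G → S) := {y | ∀ k, y (eta G (4 * k)) = bSS S s0 s1 k}

def shiftF (g : G) (y : G → S) : G → S := fun h => y (g⁻¹ * h)

noncomputable def EE : Set (G → S) := {y | ∃ g, shiftF G S g y ∈ CC G S s0 s1}

noncomputable def decF (y : G → S) (n : ℕ) : S :=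
  y (eta G (if n % 2 = 0 then 2 * n + 2 else 2 * n + 1))

noncomputable def witF (y : G → S) : G :=
  @dite _ (y ∈ EE G S s0 s1) (Classical.propDecidable _) (fun h => h.choose) (fun _ => 1)

noncomputable def fF (y : G → S) : ℕ → S := decF G S (shiftF G S (witF G S s0 s1 y) y)

variable {G S s0 s1}

theorem shift_comp (a b : G) (y : G → S) :
    shiftF G S a (shiftF G S b y) = shiftF G S (a * b) y := by
  funext h
  simp [shiftF, mul_assoc]

theorem shift_one (y : G → S) : shiftF G S 1 y = y := by
  funext h
  simp [shiftF]

theorem bSS_0 (i : ℕ) : bSS S s0 s1 (3 * i) = s0 := if_neg (by omega)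
theorem bSS_1 (i : ℕ) : bSS S s0 s1 (3 * i + 1) = s1 := if_pos (by omega)
theorem bSS_2 (i : ℕ) : bSS S s0 s1 (3 * i + 2) = s0 := if_neg (by omega)

theorem antifake (hs : s0 ≠ s1) {y : G → S} {g : G} (hy : y ∈ CC G S s0 s1)
    (hgy : shiftF G S g y ∈ CC G S s0 s1) : g = 1 := by
  by_contra hg
  obtain ⟨i, rfl⟩ := gg_surj hg
  have h1 := hgy (3 * i + 1)
  rw [bSS_1, eta_pat1] at h1
  have h2 : shiftF G S (gg G i) y (gg G i * aG G i) = y (aG G i) := by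
    simp [shiftF]
  rw [h2] at h1
  have h3 := hy (3 * i)
  rw [bSS_0, eta_pat0] at h3
  rw [h3] at h1
  exact hs h1

theorem wit_mem {y : G → S} (hy : y ∈ EE G S s0 s1) :
    shiftF G S (witF G S s0 s1 y) y ∈ CC G S s0 s1 := by
  rw [witF, dif_pos hy]
  exact hy.choose_spec

theorem wit_notmem {y : G → S} (hy : y ∉ EE G S s0 s1) : witF G S s0 s1 y = 1 := by
  rw [witF, dif_neg hy]

theorem wit_eq (hs : s0 ≠ s1) {y : G → S} {g : G} (hgy : shiftF G S g y ∈ CC G S s0 s1) :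
    witF G S s0 s1 y = g := by
  have hE : y ∈ EE G S s0 s1 := ⟨g, hgy⟩
  have hw := wit_mem hE
  have hc : shiftF G S (witF G S s0 s1 y * g⁻¹) (shiftF G S g y) ∈ CC G S s0 s1 := by
    rw [shift_comp, inv_mul_cancel_right]
    exact hw
  have := antifake hs hgy hc
  rwa [mul_inv_eq_one] at this

theorem mem_EE_shift {y : G → S} (g : G) : y ∈ EE G S s0 s1 ↔ shiftF G S g y ∈ EE G S s0 s1 := by
  constructor
  · rintro ⟨g', hg'⟩
    exact ⟨g' * g⁻¹, by rwa [shift_comp, inv_mul_cancel_right]⟩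
  · rintro ⟨g', hg'⟩
    rw [shift_comp] at hg'
    exact ⟨g' * g, hg'⟩

theorem fF_shift (hs : s0 ≠ s1) {y : G → S} (hE : y ∈ EE G S s0 s1) (g : G) :
    fF G S s0 s1 (shiftF G S g y) = fF G S s0 s1 y := by
  have hw := wit_mem hE
  have hc : shiftF G S (witF G S s0 s1 y * g⁻¹) (shiftF G S g y) ∈ CC G S s0 s1 := by
    rw [shift_comp, inv_mul_cancel_right]
    exact hw
  have hwit : witF G S s0 s1 (shiftF G S g y) = witF G S s0 s1 y * g⁻¹ := wit_eq hs hc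
  rw [fF, hwit, shift_comp, inv_mul_cancel_right, fF]

/-! ### topology -/

theorem CC_closed : IsClosed (CC G S s0 s1) := by
  have : CC G S s0 s1 = ⋂ k, {y : G → S | y (eta G (4 * k)) = bSS S s0 s1 k} := by
    ext y; simp [CC, Set.mem_iInter]
  rw [this]
  exact isClosed_iInter fun k => isClosed_eq (continuous_apply _) continuous_const

theorem shift_cont (g : G) : Continuous (shiftF G S g) :=
  continuous_pi fun h => continuous_apply _

theorem decF_cont : Continuous (decF G S) :=
  continuous_pi fun n => continuous_apply _

theorem EE_eq : EE G S s0 s1 = ⋃ g : G, shiftF G S g ⁻¹' CC G S s0 s1 := by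
  ext y
  simp only [Set.mem_iUnion, Set.mem_preimage]
  rfl

theorem EE_sigma1 : EE G S s0 s1 ∈ sigmaLevel (G → S) 1 := by
  rw [EE_eq]
  exact sigma_iUnion_countable fun g =>
    closed_mem_sigma1 (CC_closed.preimage (shift_cont g))

theorem fF_preimage (hs : s0 ≠ s1) (U : Set (ℕ → S)) :
    fF G S s0 s1 ⁻¹' U =
      (⋃ g : G, shiftF G S g ⁻¹' (CC G S s0 s1 ∩ decF G S ⁻¹' U)) ∪
        ((EE G S s0 s1)ᶜ ∩ decF G S ⁻¹' U) := by
  ext y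
  simp only [Set.mem_union, Set.mem_preimage, Set.mem_iUnion, Set.mem_inter_iff,
    Set.mem_compl_iff]
  by_cases hE : y ∈ EE G S s0 s1
  · constructor
    · intro hy
      exact Or.inl ⟨witF G S s0 s1 y, wit_mem hE, hy⟩
    · rintro (⟨g, hC, hU'⟩ | ⟨hnE, _⟩)
      · have hwg : witF G S s0 s1 y = g := wit_eq hs hC
        show decF G S (shiftF G S (witF G S s0 s1 y) y) ∈ U
        rw [hwg]
        exact hU'
      · exact absurd hE hnE
  · have hfy : fF G S s0 s1 y = decF G S y := by
      rw [fF, wit_notmem hE, shift_one]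
    constructor
    · intro hy
      rw [hfy] at hy
      exact Or.inr ⟨hE, hy⟩
    · rintro (⟨g, hC, _⟩ | ⟨_, h⟩)
      · exact absurd ⟨g, hC⟩ hE
      · rw [hfy]
        exact h

theorem hFsigma_GS : ∀ U : Set (G → S), IsOpen U →
    ∃ F : ℕ → Set (G → S), (∀ k, IsClosed (F k)) ∧ U = ⋃ k, F k :=
  fun _ hU => open_fsigma_pi hU

theorem EE_delta : IsDelta06 (EE G S s0 s1) :=
  ⟨sigma_mono_le hFsigma_GS (by omega) EE_sigma1,
    sigma_mono_le hFsigma_GS (by omega) (compl_bump EE_sigma1)⟩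

theorem fF_meas (hs : s0 ≠ s1) : Delta06Measurable (fF G S s0 s1) := by
  intro U hU
  have hUo : IsOpen (decF G S ⁻¹' U) := hU.preimage decF_cont
  obtain ⟨F, hFc, hFe⟩ := open_fsigma_pi hUo
  have h1 : (⋃ g : G, shiftF G S g ⁻¹' (CC G S s0 s1 ∩ decF G S ⁻¹' U)) ∈
      sigmaLevel (G → S) 1 := by
    have heq : (⋃ g : G, shiftF G S g ⁻¹' (CC G S s0 s1 ∩ decF G S ⁻¹' U)) =
        ⋃ p : G × ℕ, shiftF G S p.1 ⁻¹' (CC G S s0 s1 ∩ F p.2) := by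
      ext y
      simp only [Set.mem_iUnion, Set.mem_preimage, Set.mem_inter_iff, hFe, Set.mem_iUnion]
      constructor
      · rintro ⟨g, hC, k, hk⟩
        exact ⟨(g, k), hC, hk⟩
      · rintro ⟨⟨g, k⟩, hC, hk⟩
        exact ⟨g, hC, k, hk⟩
    rw [heq]
    exact sigma_iUnion_countable fun p =>
      closed_mem_sigma1 ((CC_closed.inter (hFc p.2)).preimage (shift_cont p.1))
  have h2 : ((EE G S s0 s1)ᶜ ∩ decF G S ⁻¹' U) ∈ sigmaLevel (G → S) 2 := by
    have heq : (EE G S s0 s1)ᶜ ∩ decF G S ⁻¹' U = ⋃ k, ((EE G S s0 s1)ᶜ ∩ F k) := by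
      rw [hFe, Set.inter_iUnion]
    rw [heq]
    exact sigma_iUnion_nat fun k =>
      sigma2_inter_closed hFsigma_GS (compl_bump EE_sigma1) (hFc k)
  have htot : fF G S s0 s1 ⁻¹' U ∈ sigmaLevel (G → S) 2 := by
    rw [fF_preimage hs U]
    exact sigma_union_level (sigma_mono hFsigma_GS h1) h2
  exact ⟨sigma_mono_le hFsigma_GS (by omega) htot,
    sigma_mono_le hFsigma_GS (by omega) (compl_bump htot)⟩

/-! ### the game transfer -/

def bigII (x : ℕ → S) (n : ℕ) (_ : List S) : S := if n % 4 = 1 then s1 else x ((n - 1) / 2)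

def bigI (x : ℕ → S) (n : ℕ) (_ : List S) : S :=
  if n % 4 = 0 then bSS S s0 s1 (n / 4) else x ((n - 2) / 2)

theorem yOf_eta (w : ℕ → S) (n : ℕ) :
    (fun g => w ((piG G).symm g)) (eta G n) = w n := by
  show w ((piG G).symm (piG G n)) = w n
  rw [Equiv.symm_apply_apply]

theorem shift_transfer (s0 s1 : S) (hs : s0 ≠ s1) (Γ : Pointclass) (hΓ : Reasonable Γ)
    (hdet : GammaShiftDet Γ G S) : GammaDetOn Γ S := by
  intro A hA
  set B : Set (G → S) := (fF G S s0 s1 ⁻¹' A) ∩ EE G S s0 s1 with hB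
  have hBmem : B ∈ Γ.mem (G → S) :=
    hΓ.inter_delta _ _ _ (hΓ.delta_subst _ _ _ (fF_meas hs) A hA) EE_delta
  have hBinv : ∀ x y : G → S, ShiftRel G x y → (x ∈ B ↔ y ∈ B) := by
    rintro x y ⟨g, hgy⟩
    have hyx : y = shiftF G S g x := funext fun h => hgy h
    subst hyx
    constructor
    · rintro ⟨hfx, hEx⟩
      exact ⟨by rw [Set.mem_preimage, fF_shift hs hEx g]; exact hfx, (mem_EE_shift g).mp hEx⟩
    · rintro ⟨hfx, hEx⟩
      have hEx' : x ∈ EE G S s0 s1 := (mem_EE_shift g).mpr hEx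
      refine ⟨?_, hEx'⟩
      rw [Set.mem_preimage] at hfx ⊢
      rwa [fF_shift hs hEx' g] at hfx
  have hdetB := hdet B hBmem hBinv (piG G)
  rcases hdetB with ⟨σ, hσ⟩ | ⟨τ, hτ⟩
  · -- Player I wins
    left
    refine ⟨fun l => σ (mkHist (fun _ h => σ h) (bigII (s1 := s1) (fun i => l.getD i s0))
      (2 * l.length + 2)), ?_⟩
    intro x hx
    set w : ℕ → S := mkRun (fun _ h => σ h) (bigII (s1 := s1) x) with hw
    have hwI : FollowsStratI σ w := mkRun_follows_I σ _
    have hyB : (fun g => w ((piG G).symm g)) ∈ B := hσ w hwI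
    set y : G → S := fun g => w ((piG G).symm g) with hy
    have hyeta : ∀ n, y (eta G n) = w n := fun n => by rw [hy]; exact yOf_eta w n
    -- agreement of histories
    have hagree : ∀ k : ℕ, mkHist (fun _ h => σ h)
        (bigII (s1 := s1) (fun i => (initSeg x (2 * k)).getD i s0)) (4 * k + 2) =
        mkHist (fun _ h => σ h) (bigII (s1 := s1) x) (4 * k + 2) := by
      intro k
      refine mkHist_congr (fun n _ _ h => rfl) ?_ _ le_rfl
      intro n hn hpar h
      unfold bigII
      by_cases h4 : n % 4 = 1
      · rw [if_pos h4, if_pos h4]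
      · rw [if_neg h4, if_neg h4]
        exact initSeg_getD x (by omega) s0
    have key_even : ∀ k, x (2 * k) = w (4 * k + 2) := by
      intro k
      have h1 := hx k
      have h2 : w (4 * k + 2) = σ (mkHist (fun _ h => σ h) (bigII (s1 := s1) x) (4 * k + 2)) :=
        mkRun_even _ _ _ (by omega)
      have hlen : 2 * (initSeg x (2 * k)).length + 2 = 4 * k + 2 := by
        rw [initSeg_length]; ring
      rw [h1, h2]
      beta_reduce
      rw [hlen, hagree k]
    have key_odd : ∀ k, w (4 * k + 3) = x (2 * k + 1) := by
      intro k
      have h2 : w (4 * k + 3) = bigII (s1 := s1) x (4 * k + 3)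
          (mkHist (fun _ h => σ h) (bigII (s1 := s1) x) (4 * k + 3)) :=
        mkRun_odd _ _ _ (by omega)
      rw [h2]
      unfold bigII
      rw [if_neg (by omega)]
      congr 1
      omega
    have key_junk : ∀ i, w (4 * i + 1) = s1 := by
      intro i
      have h2 : w (4 * i + 1) = bigII (s1 := s1) x (4 * i + 1)
          (mkHist (fun _ h => σ h) (bigII (s1 := s1) x) (4 * i + 1)) :=
        mkRun_odd _ _ _ (by omega)
      rw [h2]
      unfold bigII
      rw [if_pos (by omega)]
    obtain ⟨hfA, hEy⟩ := hyB
    have honly : ∀ g : G, shiftF G S g y ∈ CC G S s0 s1 → g = 1 := by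
      intro g hC
      by_contra hg
      obtain ⟨i, rfl⟩ := gg_surj hg
      have h1 := hC (3 * i + 2)
      rw [bSS_2, eta_pat2] at h1
      have h2 : shiftF G S (gg G i) y (gg G i * dG G i) = y (dG G i) := by simp [shiftF]
      rw [h2] at h1
      have h3 : y (dG G i) = w (4 * i + 1) := by
        rw [← eta_junk]
        exact hyeta _
      rw [h3, key_junk i] at h1
      exact hs h1.symm
    have hwit1 : witF G S s0 s1 y = 1 := honly _ (wit_mem hEy)
    have hfy : fF G S s0 s1 y = decF G S y := by rw [fF, hwit1, shift_one]
    have hdec : decF G S y = x := by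
      funext n
      rcases Nat.even_or_odd n with ⟨k, hk⟩ | ⟨k, hk⟩
      · have hn2 : n % 2 = 0 := by omega
        have : decF G S y n = y (eta G (2 * n + 2)) := by rw [decF, if_pos hn2]
        rw [this, hyeta]
        have : 2 * n + 2 = 4 * k + 2 := by omega
        rw [this, ← key_even k]
        congr 1
        omega
      · have hn2 : ¬ n % 2 = 0 := by omega
        have : decF G S y n = y (eta G (2 * n + 1)) := by rw [decF, if_neg hn2]
        rw [this, hyeta]
        have h21 : 2 * n + 1 = 4 * k + 3 := by omega
        rw [h21, key_odd k]
        congr 1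
        omega
    rw [Set.mem_preimage, hfy, hdec] at hfA
    exact hfA
  · -- Player II wins
    right
    refine ⟨fun l => τ (mkHist (bigI (s0 := s0) (s1 := s1) (fun i => l.getD i s0))
      (fun _ h => τ h) (2 * l.length + 1)), ?_⟩
    intro x hx
    set w : ℕ → S := mkRun (bigI (s0 := s0) (s1 := s1) x) (fun _ h => τ h) with hw
    have hwII : FollowsStratII τ w := mkRun_follows_II _ τ
    have hyB : (fun g => w ((piG G).symm g)) ∉ B := hτ w hwII
    set y : G → S := fun g => w ((piG G).symm g) with hy
    have hyeta : ∀ n, y (eta G n) = w n := fun n => by rw [hy]; exact yOf_eta w n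
    have hyC : y ∈ CC G S s0 s1 := by
      intro k
      rw [hyeta]
      have h2 : w (4 * k) = bigI (s0 := s0) (s1 := s1) x (4 * k)
          (mkHist (bigI (s0 := s0) (s1 := s1) x) (fun _ h => τ h) (4 * k)) :=
        mkRun_even _ _ _ (by omega)
      rw [h2]
      unfold bigI
      rw [if_pos (by omega)]
      congr 1
      omega
    have hEy : y ∈ EE G S s0 s1 := ⟨1, by rwa [shift_one]⟩
    have hwit1 : witF G S s0 s1 y = 1 := antifake hs hyC (wit_mem hEy)
    have hfy : fF G S s0 s1 y = decF G S y := by rw [fF, hwit1, shift_one]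
    have hagree : ∀ k : ℕ, mkHist (bigI (s0 := s0) (s1 := s1)
        (fun i => (initSeg x (2 * k + 1)).getD i s0)) (fun _ h => τ h) (4 * k + 3) =
        mkHist (bigI (s0 := s0) (s1 := s1) x) (fun _ h => τ h) (4 * k + 3) := by
      intro k
      refine mkHist_congr ?_ (fun n _ _ h => rfl) _ le_rfl
      intro n hn hpar h
      unfold bigI
      by_cases h4 : n % 4 = 0
      · rw [if_pos h4, if_pos h4]
      · rw [if_neg h4, if_neg h4]
        exact initSeg_getD x (by omega) s0
    have key_even : ∀ k, w (4 * k + 2) = x (2 * k) := by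
      intro k
      have h2 : w (4 * k + 2) = bigI (s0 := s0) (s1 := s1) x (4 * k + 2)
          (mkHist (bigI (s0 := s0) (s1 := s1) x) (fun _ h => τ h) (4 * k + 2)) :=
        mkRun_even _ _ _ (by omega)
      rw [h2]
      unfold bigI
      rw [if_neg (by omega)]
      congr 1
      omega
    have key_odd : ∀ k, w (4 * k + 3) = x (2 * k + 1) := by
      intro k
      have h1 := hx k
      have h2 : w (4 * k + 3) = τ (mkHist (bigI (s0 := s0) (s1 := s1) x)
          (fun _ h => τ h) (4 * k + 3)) := mkRun_odd _ _ _ (by omega)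
      have hlen : 2 * (initSeg x (2 * k + 1)).length + 1 = 4 * k + 3 := by
        rw [initSeg_length]; ring
      rw [h2, h1]
      beta_reduce
      rw [hlen, hagree k]
    have hdec : decF G S y = x := by
      funext n
      rcases Nat.even_or_odd n with ⟨k, hk⟩ | ⟨k, hk⟩
      · have hn2 : n % 2 = 0 := by omega
        have hd : decF G S y n = y (eta G (2 * n + 2)) := by rw [decF, if_pos hn2]
        rw [hd, hyeta]
        have h22 : 2 * n + 2 = 4 * k + 2 := by omega
        rw [h22, key_even k]
        congr 1
        omega
      · have hn2 : ¬ n % 2 = 0 := by omega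
        have hd : decF G S y n = y (eta G (2 * n + 1)) := by rw [decF, if_neg hn2]
        rw [hd, hyeta]
        have h21 : 2 * n + 1 = 4 * k + 3 := by omega
        rw [h21, key_odd k]
        congr 1
        omega
    intro hxA
    exact hyB ⟨by rw [Set.mem_preimage, hfy, hdec]; exact hxA, hEy⟩
end Main

theorem stmt0 (G : Type) [Group G] [Countable G] [Infinite G]
    (Γ : Pointclass) (hΓ : Reasonable Γ) :
    (GammaShiftDet Γ G Bool → GammaDetOn Γ Bool) ∧
    (GammaShiftDet Γ G ℕ → GammaDetOn Γ ℕ) := by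
  constructor
  · intro hdet
    exact shift_transfer false true (by simp) Γ hΓ hdet
  · intro hdet
    exact shift_transfer 0 1 (by norm_num) Γ hΓ hdet
end

section
/- Every infinite group has an infinite weakly amenable subgroup. -/
open Filter Set

/-- Condition (2) of appropriateness: for each `g`, each class `C` meets at most `b` classes
after translation by `g`. -/
def classBound {G : Type*} [Group G] (r : Setoid G) (g : G) (b : ℕ) : Prop :=
  ∀ C : Quotient r,
    {C' : Quotient r | ∃ h : G, Quotient.mk r h = C ∧ Quotient.mk r (g * h) = C'}.encard ≤ (b : ℕ∞)

/-- An appropriate equivalence relation on a group `G`. -/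
def AppropriateRel {G : Type*} [Group G] (r : Setoid G) : Prop :=
  Infinite (Quotient r) ∧ ∀ g : G, ∃ b : ℕ, classBound r g b

/-- The increasing sequence `A n` of finite sets of `∼`-classes witnesses the Følner-type
condition in the definition of weak amenability. -/
def WAWitness {G : Type*} [Group G] (r : Setoid G) (A : ℕ → Finset (Quotient r)) : Prop :=
  Monotone A ∧ (∀ C : Quotient r, ∃ n, C ∈ A n) ∧
    ∀ g : G, Filter.Tendsto (fun n =>
      (({C : Quotient r | C ∈ A n ∧
          ∀ h : G, Quotient.mk r h = C → Quotient.mk r (g * h) ∈ A n}.ncard : ℝ)) /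
        ((A n).card : ℝ)) Filter.atTop (nhds 1)

/-- A group is weakly amenable if it is finite or carries an appropriate equivalence relation
together with a witnessing increasing sequence of finite sets of classes. -/
def WeaklyAmenable (G : Type*) [Group G] : Prop :=
  Finite G ∨ ∃ (r : Setoid G) (A : ℕ → Finset (Quotient r)), AppropriateRel r ∧ WAWitness r A

open Pointwise in
lemma caseB {Γ : Type*} [Group Γ] [Infinite Γ] (K : ℕ → Subgroup Γ)
    (hfin : ∀ n, (K n : Set Γ).Finite) (hmono : Monotone K)
    (hcover : ∀ g : Γ, ∃ n, g ∈ K n) : WeaklyAmenable Γ := by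
  classical
  set r : Setoid Γ := ⟨(· = ·), eq_equivalence⟩ with hr
  have key : ∀ a b : Γ, Quotient.mk r a = Quotient.mk r b ↔ a = b := by
    intro a b
    exact ⟨fun h => Quotient.exact h, fun h => h ▸ rfl⟩
  have mkinj : Function.Injective (Quotient.mk r) := fun a b h => (key a b).mp h
  set A : ℕ → Finset (Quotient r) := fun n => (hfin n).toFinset.image (Quotient.mk r) with hA
  have memA : ∀ (c : Γ) (n : ℕ), Quotient.mk r c ∈ A n ↔ c ∈ K n := by
    intro c n
    simp only [hA, Finset.mem_image, Set.Finite.mem_toFinset, SetLike.mem_coe]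
    constructor
    · rintro ⟨d, hd, hdc⟩; rwa [← mkinj hdc]
    · intro hc; exact ⟨c, hc, rfl⟩
  refine Or.inr ⟨r, A, ⟨⟨?_, ?_⟩, ?_, ?_, ?_⟩⟩
  · exact Infinite.of_injective _ mkinj
  · -- classBound with b = 1
    intro g
    refine ⟨1, fun C => ?_⟩
    obtain ⟨c, rfl⟩ := Quotient.exists_rep C
    have : {C' : Quotient r | ∃ h : Γ, Quotient.mk r h = Quotient.mk r c ∧
        Quotient.mk r (g * h) = C'} ⊆ {Quotient.mk r (g * c)} := by
      rintro C' ⟨h, h1, h2⟩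
      rw [(key h c).mp h1] at h2
      simp [← h2]
    calc _ ≤ ({Quotient.mk r (g * c)} : Set (Quotient r)).encard := Set.encard_mono this
    _ = 1 := Set.encard_singleton _
    _ ≤ _ := by norm_num
  · -- Monotone
    intro m n hmn
    exact Finset.image_subset_image (Set.Finite.toFinset_subset_toFinset.mpr (hmono hmn))
  · -- cover
    intro C
    obtain ⟨c, rfl⟩ := Quotient.exists_rep C
    obtain ⟨n, hn⟩ := hcover c
    exact ⟨n, (memA c n).mpr hn⟩
  · -- tendsto
    intro g
    obtain ⟨m, hm⟩ := hcover g
    have : ∀ n ≥ m, (({C : Quotient r | C ∈ A n ∧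
          ∀ h : Γ, Quotient.mk r h = C → Quotient.mk r (g * h) ∈ A n}.ncard : ℝ)) /
        ((A n).card : ℝ) = 1 := by
      intro n hn
      have hset : {C : Quotient r | C ∈ A n ∧
          ∀ h : Γ, Quotient.mk r h = C → Quotient.mk r (g * h) ∈ A n} = ↑(A n) := by
        ext C
        simp only [Set.mem_setOf_eq, Finset.coe_sort_coe, Finset.mem_coe, and_iff_left_iff_imp]
        intro hC h hh
        obtain ⟨c, rfl⟩ := Quotient.exists_rep C
        rw [key h c] at hh
        subst hh
        rw [memA] at hC ⊢
        exact mul_mem (hmono hn hm) hC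
      rw [hset, Set.ncard_coe_finset]
      have hne : (A n).Nonempty := ⟨Quotient.mk r 1, (memA 1 n).mpr (one_mem _)⟩
      have : (0:ℝ) < (A n).card := by exact_mod_cast Finset.card_pos.mpr hne
      field_simp
    refine Filter.Tendsto.congr' ?_ tendsto_const_nhds
    filter_upwards [Filter.eventually_ge_atTop m] with n hn
    exact (this n hn).symm

open Pointwise in
lemma caseA {Γ : Type*} [Group Γ] [Infinite Γ] (T : Set Γ) (hfin : T.Finite)
    (hT1 : (1:Γ) ∈ T) (hsymm : T⁻¹ = T) (hgen : Subgroup.closure T = ⊤) :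
    WeaklyAmenable Γ := by
  classical
  -- every element is in some power of T
  have listpow : ∀ l : List Γ, (∀ y ∈ l, y ∈ T) → l.prod ∈ T ^ l.length := by
    intro l
    induction l with
    | nil => intro _; simp [Set.mem_one]
    | cons a l ih =>
      intro h
      rw [List.prod_cons, List.length_cons, pow_succ']
      exact Set.mul_mem_mul (h a (by simp)) (ih fun y hy => h y (by simp [hy]))
  have hex : ∀ g : Γ, ∃ n, g ∈ T ^ n := by
    intro g
    have hg : g ∈ Submonoid.closure (T ∪ T⁻¹) := by
      rw [← Subgroup.closure_toSubmonoid]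
      show g ∈ (Subgroup.closure T).toSubmonoid
      rw [hgen]; trivial
    rw [hsymm, Set.union_self] at hg
    obtain ⟨l, hl, hlp⟩ := Submonoid.exists_list_of_mem_closure hg
    exact ⟨l.length, hlp ▸ listpow l hl⟩
  set ℓ : Γ → ℕ := fun g => Nat.find (hex g) with hℓ
  have lmem : ∀ g, g ∈ T ^ ℓ g := fun g => Nat.find_spec (hex g)
  have lle : ∀ {g : Γ} {n : ℕ}, g ∈ T ^ n → ℓ g ≤ n := fun {g n} h => Nat.find_min' (hex g) h
  have powmono : ∀ {m n : ℕ}, m ≤ n → T ^ m ⊆ T ^ n := fun h => Set.pow_subset_pow_right hT1 h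
  have l_one : ℓ 1 = 0 := Nat.le_zero.mp (lle (by simp [Set.mem_one]))
  have l_mul : ∀ g h : Γ, ℓ (g * h) ≤ ℓ g + ℓ h := by
    intro g h
    exact lle (by rw [pow_add]; exact Set.mul_mem_mul (lmem g) (lmem h))
  have l_inv : ∀ g : Γ, ℓ g⁻¹ ≤ ℓ g := by
    intro g
    refine lle ?_
    rw [← hsymm, inv_pow]
    exact Set.inv_mem_inv.mpr (lmem g)
  have Tpowfin : ∀ n, (T ^ n).Finite := by
    intro n
    induction n with
    | zero => simp [Set.finite_one]
    | succ n ih => rw [pow_succ]; exact ih.mul hfin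
  -- spheres are nonempty
  have sphere : ∀ m, ∃ g, ℓ g = m := by
    intro m
    by_contra hcon
    push_neg at hcon
    match m with
    | 0 => exact hcon 1 l_one
    | (k+1) =>
      have step : T ^ (k+1) ⊆ T ^ k := by
        intro g hg
        have h1 : ℓ g ≤ k + 1 := lle hg
        have h2 : ℓ g ≠ k + 1 := hcon g
        exact powmono (by omega) (lmem g)
      have allk : ∀ j, T ^ (k + j) ⊆ T ^ k := by
        intro j
        induction j with
        | zero => simp
        | succ j ih =>
          calc T ^ (k + (j+1)) = T * T ^ (k + j) := by rw [← pow_succ']; ring_nf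
          _ ⊆ T * T ^ k := Set.mul_subset_mul_left ih
          _ = T ^ (k+1) := (pow_succ' T k).symm
          _ ⊆ T ^ k := step
      have : (Set.univ : Set Γ) ⊆ T ^ k := by
        intro g _
        rcases le_or_gt (ℓ g) k with h | h
        · exact powmono h (lmem g)
        · have : T ^ ℓ g ⊆ T ^ k := by
            have := allk (ℓ g - k)
            rwa [Nat.add_sub_cancel' h.le] at this
          exact this (lmem g)
      exact Set.infinite_univ ((Tpowfin k).subset this)
  -- the setoid
  set r : Setoid Γ := ⟨fun a b => ℓ a = ℓ b, ⟨fun _ => rfl, Eq.symm, Eq.trans⟩⟩ with hr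
  have key : ∀ a b : Γ, Quotient.mk r a = Quotient.mk r b ↔ ℓ a = ℓ b :=
    fun a b => ⟨fun h => Quotient.exact h, fun h => Quotient.sound h⟩
  set lbar : Quotient r → ℕ := Quotient.lift ℓ (fun _ _ h => h) with hlbar
  have lbar_mk : ∀ a : Γ, lbar (Quotient.mk r a) = ℓ a := fun a => rfl
  set σ : ℕ → Quotient r := fun m => Quotient.mk r (sphere m).choose with hσ
  have lσ : ∀ m, lbar (σ m) = m := fun m => (sphere m).choose_spec
  have σl : ∀ C : Quotient r, σ (lbar C) = C := by
    intro C
    induction C using Quotient.ind with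
    | _ a => exact Quotient.sound ((sphere (ℓ a)).choose_spec)
  have σinj : Function.Injective σ := Function.LeftInverse.injective lσ
  set A : ℕ → Finset (Quotient r) := fun n => (Finset.range (n+1)).image σ with hA
  have memA : ∀ (C : Quotient r) (n : ℕ), C ∈ A n ↔ lbar C ≤ n := by
    intro C n
    simp only [hA, Finset.mem_image, Finset.mem_range]
    constructor
    · rintro ⟨m, hm, rfl⟩; rw [lσ]; omega
    · intro h; exact ⟨lbar C, by omega, σl C⟩
  have cardA : ∀ n, (A n).card = n + 1 := by
    intro n
    rw [hA, Finset.card_image_of_injective _ σinj, Finset.card_range]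
  refine Or.inr ⟨r, A, ⟨⟨Infinite.of_injective σ σinj, ?_⟩, ?_, ?_, ?_⟩⟩
  · -- classBound
    intro g
    refine ⟨2 * ℓ g + 1, fun C => ?_⟩
    set m := lbar C with hm
    have hsub : {C' : Quotient r | ∃ h : Γ, Quotient.mk r h = C ∧ Quotient.mk r (g * h) = C'} ⊆
        ↑((Finset.Icc (m - ℓ g) (m + ℓ g)).image σ) := by
      rintro C' ⟨h, h1, h2⟩
      have hh : ℓ h = m := by rw [hm, ← h1, lbar_mk]
      have hub : ℓ (g * h) ≤ m + ℓ g := by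
        have := l_mul g h; omega
      have hlb : m - ℓ g ≤ ℓ (g * h) := by
        have h3 : ℓ h ≤ ℓ g⁻¹ + ℓ (g * h) := by
          have := l_mul g⁻¹ (g * h)
          rwa [inv_mul_cancel_left] at this
        have h4 := l_inv g
        omega
      have : C' = σ (ℓ (g * h)) := by
        rw [← h2, hσ]
        exact (σl (Quotient.mk r (g * h))).symm
      rw [this]
      simp only [Finset.coe_image, Set.mem_image, Finset.mem_coe, Finset.mem_Icc]
      exact ⟨ℓ (g * h), by simp [Finset.mem_Icc]; omega, rfl⟩
    calc _ ≤ _ := Set.encard_le_encard hsub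
    _ = (((Finset.Icc (m - ℓ g) (m + ℓ g)).image σ).card : ℕ∞) :=
        Set.encard_coe_eq_coe_finsetCard _
    _ ≤ ((2 * ℓ g + 1 : ℕ) : ℕ∞) := by
        have h1 : ((Finset.Icc (m - ℓ g) (m + ℓ g)).image σ).card ≤ 2 * ℓ g + 1 := by
          refine Finset.card_image_le.trans ?_
          rw [Nat.card_Icc]; omega
        exact_mod_cast h1
  · -- Monotone
    intro a b hab
    exact Finset.image_subset_image (Finset.range_subset_range.mpr (by omega))
  · -- cover
    intro C
    exact ⟨lbar C, (memA C (lbar C)).mpr le_rfl⟩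
  · -- tendsto
    intro g
    set L := ℓ g with hL
    set f : ℕ → ℝ := fun n =>
      (({C : Quotient r | C ∈ A n ∧
          ∀ h : Γ, Quotient.mk r h = C → Quotient.mk r (g * h) ∈ A n}.ncard : ℝ)) /
        ((A n).card : ℝ) with hf
    have hub : ∀ n, f n ≤ 1 := by
      intro n
      rw [hf]
      have hsub : {C : Quotient r | C ∈ A n ∧
          ∀ h : Γ, Quotient.mk r h = C → Quotient.mk r (g * h) ∈ A n} ⊆ ↑(A n) :=
        fun C hC => hC.1
      have h1 : {C : Quotient r | C ∈ A n ∧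
          ∀ h : Γ, Quotient.mk r h = C → Quotient.mk r (g * h) ∈ A n}.ncard ≤ (A n).card := by
        rw [← Set.ncard_coe_finset (A n)]
        exact Set.ncard_le_ncard hsub (A n).finite_toSet
      have hpos : (0:ℝ) < ((A n).card : ℝ) := by
        rw [cardA]; positivity
      rw [div_le_one hpos]
      exact_mod_cast h1
    have hlb : ∀ n : ℕ, (1 : ℝ) - (L : ℝ) / ((n:ℝ) + 1) ≤ f n := by
      intro n
      have hsub : ↑((Finset.range (n + 1 - L)).image σ) ⊆ {C : Quotient r | C ∈ A n ∧
          ∀ h : Γ, Quotient.mk r h = C → Quotient.mk r (g * h) ∈ A n} := by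
        intro C hC
        simp only [Finset.coe_image, Set.mem_image, Finset.mem_coe, Finset.mem_range] at hC
        obtain ⟨m, hmn, rfl⟩ := hC
        have hmL : m + L ≤ n := by omega
        constructor
        · rw [memA, lσ]; omega
        · intro h hh
          have hℓh : ℓ h = m := by
            have := congrArg lbar hh
            rw [lbar_mk, lσ] at this
            exact this
          rw [memA, lbar_mk]
          have := l_mul g h
          omega
      have h1 : n + 1 - L ≤ {C : Quotient r | C ∈ A n ∧
          ∀ h : Γ, Quotient.mk r h = C → Quotient.mk r (g * h) ∈ A n}.ncard := by
        have hfin' : {C : Quotient r | C ∈ A n ∧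
            ∀ h : Γ, Quotient.mk r h = C → Quotient.mk r (g * h) ∈ A n}.Finite :=
          (A n).finite_toSet.subset (fun C hC => hC.1)
        have := Set.ncard_le_ncard hsub hfin'
        rwa [Set.ncard_coe_finset, Finset.card_image_of_injective _ σinj,
          Finset.card_range] at this
      have hpos : (0:ℝ) < ((n:ℝ) + 1) := by positivity
      simp only [hf, cardA]
      push_cast
      have key2 : (1:ℝ) - (L:ℝ)/((n:ℝ)+1) = (((n:ℝ)+1) - (L:ℝ))/((n:ℝ)+1) := by
        field_simp
      rw [key2]
      gcongr
      have h2 : ((n + 1 - L : ℕ) : ℝ) ≤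
          ({C : Quotient r | C ∈ A n ∧
            ∀ h : Γ, Quotient.mk r h = C → Quotient.mk r (g * h) ∈ A n}.ncard : ℝ) := by
        exact_mod_cast h1
      have h3 : ((n:ℝ) + 1) - (L:ℝ) ≤ ((n + 1 - L : ℕ) : ℝ) := by
        rcases le_or_gt L (n+1) with h | h
        · rw [Nat.cast_sub h]; push_cast; linarith
        · have : ((n + 1 - L : ℕ) : ℝ) = 0 := by
            rw [Nat.sub_eq_zero_of_le h.le]; simp
          rw [this]
          have : ((n:ℝ)+1) < (L:ℝ) := by exact_mod_cast h
          linarith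
      linarith
    have hlbT : Tendsto (fun n : ℕ => (1 : ℝ) - (L : ℝ) / ((n:ℝ) + 1)) atTop (nhds 1) := by
      have h0 : Tendsto (fun n : ℕ => (L : ℝ) / ((n:ℝ) + 1)) atTop (nhds 0) := by
        apply Tendsto.div_atTop tendsto_const_nhds
        exact tendsto_atTop_add_const_right _ 1 tendsto_natCast_atTop_atTop
      have h1 : Tendsto (fun n : ℕ => (1 : ℝ) - (L : ℝ) / ((n:ℝ) + 1)) atTop (nhds (1 - 0)) :=
        Tendsto.sub tendsto_const_nhds h0
      simpa using h1
    exact tendsto_of_tendsto_of_tendsto_of_le_of_le hlbT tendsto_const_nhds hlb hub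

theorem stmt1 (G : Type*) [Group G] [Infinite G] :
    ∃ H : Subgroup G, Infinite H ∧ WeaklyAmenable H := by
  classical
  by_cases hcase : ∃ S : Finset G, Infinite (Subgroup.closure (S : Set G))
  · obtain ⟨S, hS⟩ := hcase
    refine ⟨Subgroup.closure (S : Set G), hS, ?_⟩
    set Γ := ↥(Subgroup.closure (S : Set G)) with hΓ
    haveI : Infinite Γ := hS
    haveI : Group.FG Γ := Group.closure_finset_fg S
    obtain ⟨S', -, hS'⟩ := Group.rank_spec Γ
    set T : Set Γ := ↑S' ∪ (↑S' : Set Γ)⁻¹ ∪ {1} with hT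
    refine caseA T ?_ ?_ ?_ ?_
    · exact (S'.finite_toSet.union S'.finite_toSet.inv).union (Set.finite_singleton 1)
    · simp [hT]
    · rw [hT, Set.union_inv, Set.union_inv, inv_inv, Set.inv_singleton, inv_one]
      ext g
      simp only [Set.mem_union]
      tauto
    · rw [eq_top_iff, ← hS']
      apply Subgroup.closure_mono
      intro a ha
      exact Or.inl (Or.inl ha)
  · push_neg at hcase
    have hfinclo : ∀ S : Finset G, Finite (Subgroup.closure (S : Set G)) := by
      intro S
      exact hcase S
    set x := Infinite.natEmbedding G with hx
    set H := Subgroup.closure (Set.range x) with hH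
    have hinf : Infinite H := by
      have h1 : ((H : Set G)).Infinite :=
        (Set.infinite_range_of_injective x.injective).mono Subgroup.subset_closure
      exact h1.to_subtype
    refine ⟨H, hinf, ?_⟩
    haveI := hinf
    set y : ℕ → H := fun n => ⟨x n, Subgroup.subset_closure (Set.mem_range_self n)⟩ with hy
    set K : ℕ → Subgroup H := fun n => Subgroup.closure (y '' Set.Iio n) with hK
    have hmono : Monotone K := fun a b hab =>
      Subgroup.closure_mono (Set.image_mono (Set.Iio_subset_Iio hab))
    have hcover : ∀ c : H, ∃ n, c ∈ K n := by
      have h1 : (⋃ n, y '' Set.Iio n) = Set.range y := by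
        ext c
        simp only [Set.mem_iUnion, Set.mem_image, Set.mem_Iio, Set.mem_range]
        constructor
        · rintro ⟨n, k, _, rfl⟩; exact ⟨k, rfl⟩
        · rintro ⟨k, rfl⟩; exact ⟨k + 1, k, Nat.lt_succ_self k, rfl⟩
      have h2 : Set.range y = (H.subtype) ⁻¹' (Set.range x) := by
        ext c
        simp only [Set.mem_range, Set.mem_preimage, Subgroup.coe_subtype]
        constructor
        · rintro ⟨n, rfl⟩; exact ⟨n, rfl⟩
        · rintro ⟨n, hn⟩; exact ⟨n, Subtype.ext hn⟩
      have htop : (⨆ n, K n) = ⊤ := by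
        calc (⨆ n, K n) = Subgroup.closure (⋃ n, y '' Set.Iio n) :=
              (Subgroup.closure_iUnion _).symm
        _ = Subgroup.closure ((H.subtype) ⁻¹' (Set.range x)) := by rw [h1, h2]
        _ = ⊤ := Subgroup.closure_preimage_eq_top _
      intro c
      have hc : c ∈ ⨆ n, K n := htop ▸ Subgroup.mem_top c
      rwa [Subgroup.mem_iSup_of_directed (hmono.directed_le)] at hc
    refine caseB K ?_ hmono hcover
    · intro n
      have himg : Subtype.val '' (y '' Set.Iio n) =
          (((Finset.range n).image x : Finset G) : Set G) := by
        ext a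
        simp only [Set.mem_image, Finset.coe_image, Finset.coe_range]
        constructor
        · rintro ⟨b, ⟨k, hk, rfl⟩, rfl⟩; exact ⟨k, hk, rfl⟩
        · rintro ⟨k, hk, rfl⟩; exact ⟨y k, ⟨k, hk, rfl⟩, rfl⟩
      have hmapfin : (((K n).map H.subtype : Subgroup G) : Set G).Finite := by
        rw [hK, MonoidHom.map_closure, Subgroup.coe_subtype, himg]
        exact Set.finite_coe_iff.mp (hfinclo _)
      have hcoe : Subtype.val '' ((K n : Set H)) = (((K n).map H.subtype : Subgroup G) : Set G) := by
        rw [Subgroup.coe_map, Subgroup.coe_subtype]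
      refine Set.Finite.of_finite_image ?_ (Subtype.coe_injective.injOn)
      rw [hcoe]
      exact hmapfin
end

section
/- Let H be an infinite group generated by a finite subgroup F together with an element g of finite order. Then H is weakly amenable. Moreover, this is witnessed by the equivalence relation h₁ ∼ h₂ iff |h₁| = |h₂|, where |h| is the minimal n such that h can be written as f₁g^{a₁}f₂g^{a₂}⋯f_ng^{a_n} with each f_i ∈ F and each a_i a positive integer less than the order of g: each ∼-class is finite, ∼ is appropriate with b(h) = 2|h| + 2, and the sets A_n = {[h]_∼ : |h| ≤ n} satisfy the required limit condition. -/
open Filter Set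

/-- The minimal length of a representation `h = f₁ g^{a₁} f₂ g^{a₂} ⋯ f_n g^{a_n}` with
`f_i ∈ F` and `0 < a_i < orderOf g`. -/
noncomputable def repLength {H : Type*} [Group H] (F : Subgroup H) (g : H) (h : H) : ℕ :=
  sInf {n | ∃ (f : Fin n → H) (a : Fin n → ℕ),
    (∀ i, f i ∈ F) ∧ (∀ i, 0 < a i ∧ a i < orderOf g) ∧
    h = (List.ofFn (fun i : Fin n => f i * g ^ (a i))).prod}

/-- The equivalence relation `h₁ ∼ h₂ ↔ |h₁| = |h₂|` for the representation length. -/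
noncomputable def lenSetoid {H : Type*} [Group H] (F : Subgroup H) (g : H) : Setoid H :=
  Setoid.ker (repLength F g)

/-- The set of classes of elements of length at most `n`. -/
def lenClasses {H : Type*} [Group H] (F : Subgroup H) (g : H) (n : ℕ) :
    Set (Quotient (lenSetoid F g)) :=
  {C | ∃ h : H, Quotient.mk (lenSetoid F g) h = C ∧ repLength F g h ≤ n}

namespace WAaux

variable {H : Type*} [Group H]

/-- validity of a block list -/
def Valid (F : Subgroup H) (g : H) (l : List (H × ℕ)) : Prop :=
  ∀ p ∈ l, p.1 ∈ F ∧ 0 < p.2 ∧ p.2 < orderOf g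

/-- value of a block list -/
def lval (g : H) (l : List (H × ℕ)) : H := (l.map fun p => p.1 * g ^ p.2).prod

@[simp] lemma lval_nil (g : H) : lval g ([] : List (H × ℕ)) = 1 := rfl

lemma lval_cons (g : H) (p : H × ℕ) (t : List (H × ℕ)) :
    lval g (p :: t) = p.1 * g ^ p.2 * lval g t := by
  simp [lval]

lemma lval_append (g : H) (l₁ l₂ : List (H × ℕ)) :
    lval g (l₁ ++ l₂) = lval g l₁ * lval g l₂ := by
  simp [lval]

lemma valid_append {F : Subgroup H} {g : H} {l₁ l₂ : List (H × ℕ)}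
    (h₁ : Valid F g l₁) (h₂ : Valid F g l₂) : Valid F g (l₁ ++ l₂) := by
  intro p hp
  rcases List.mem_append.1 hp with h | h
  · exact h₁ p h
  · exact h₂ p h

/-- the defining set of `repLength` -/
def repSet (F : Subgroup H) (g : H) (h : H) : Set ℕ :=
  {n | ∃ (f : Fin n → H) (a : Fin n → ℕ),
    (∀ i, f i ∈ F) ∧ (∀ i, 0 < a i ∧ a i < orderOf g) ∧
    h = (List.ofFn (fun i : Fin n => f i * g ^ (a i))).prod}

lemma repLength_def (F : Subgroup H) (g : H) (h : H) :
    repLength F g h = sInf (repSet F g h) := rfl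

lemma length_mem_repSet {F : Subgroup H} {g : H} {l : List (H × ℕ)} (hl : Valid F g l) :
    l.length ∈ repSet F g (lval g l) := by
  refine ⟨fun i => (l.get i).1, fun i => (l.get i).2, fun i => (hl _ (l.get_mem i)).1,
    fun i => (hl _ (l.get_mem i)).2, ?_⟩
  conv_lhs => rw [lval, ← List.ofFn_get l, List.map_ofFn]
  rfl

lemma mem_repSet_iff {F : Subgroup H} {g : H} {h : H} {n : ℕ} :
    n ∈ repSet F g h ↔ ∃ l : List (H × ℕ), Valid F g l ∧ lval g l = h ∧ l.length = n := by
  constructor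
  · rintro ⟨f, a, hf, ha, rfl⟩
    refine ⟨List.ofFn (fun i => (f i, a i)), ?_, ?_, by simp⟩
    · intro p hp
      obtain ⟨i, rfl⟩ := List.mem_ofFn.1 hp
      exact ⟨hf i, ha i⟩
    · rw [lval, List.map_ofFn]
      rfl
  · rintro ⟨l, hl, rfl, rfl⟩
    exact length_mem_repSet hl

lemma repLength_le {F : Subgroup H} {g : H} {l : List (H × ℕ)} (hl : Valid F g l) :
    repLength F g (lval g l) ≤ l.length :=
  Nat.sInf_le (length_mem_repSet hl)

lemma repLength_one (F : Subgroup H) (g : H) : repLength F g 1 = 0 :=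
  Nat.le_zero.1 (repLength_le (F := F) (g := g) (l := []) (by intro p hp; simp at hp))

section total

variable {F : Subgroup H} {g : H} (hm : 2 ≤ orderOf g)
include hm

omit hm in
lemma exists_inv_mul_list :
    ∀ l : List (H × ℕ), Valid F g l → ∀ lw : List (H × ℕ), Valid F g lw → lw ≠ [] →
      ∃ l' : List (H × ℕ), Valid F g l' ∧ lval g l' = (lval g l)⁻¹ * lval g lw ∧
        l'.length = l.length + lw.length := by
  intro l
  induction l with
  | nil => intro _ lw hw _; exact ⟨lw, hw, by simp, by simp⟩
  | cons p t ih =>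
    intro hl lw hw hwne
    rcases lw with _ | ⟨q, tw⟩
    · exact absurd rfl hwne
    have hp := hl p List.mem_cons_self
    have hq := hw q List.mem_cons_self
    have ht : Valid F g t := fun x hx => hl x (List.mem_cons_of_mem _ hx)
    set lw' : List (H × ℕ) := (1, orderOf g - p.2) :: (p.1⁻¹ * q.1, q.2) :: tw with hlw'
    have hw' : Valid F g lw' := by
      intro x hx
      rcases List.mem_cons.1 hx with rfl | hx
      · exact ⟨Subgroup.one_mem F, by omega, by omega⟩
      rcases List.mem_cons.1 hx with rfl | hx
      · exact ⟨mul_mem (inv_mem hp.1) hq.1, hq.2⟩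
      · exact hw x (List.mem_cons_of_mem _ hx)
    have hval : lval g lw' = (p.1 * g ^ p.2)⁻¹ * lval g (q :: tw) := by
      rw [hlw', lval_cons, lval_cons, lval_cons]
      have hgo : g ^ orderOf g = 1 := pow_orderOf_eq_one g
      have : g ^ (orderOf g - p.2) = (g ^ p.2)⁻¹ := by
        rw [eq_inv_iff_mul_eq_one, ← pow_add]
        rw [Nat.sub_add_cancel (le_of_lt hp.2.2)]
        exact hgo
      rw [this]
      group
    obtain ⟨l', hl', hval', hlen'⟩ := ih ht lw' hw' (by simp [hlw'])
    refine ⟨l', hl', ?_, ?_⟩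
    · rw [hval', hval, lval_cons g p t]
      group
    · rw [hlen', hlw']
      simp
      omega

lemma exists_one_list : ∃ l : List (H × ℕ), Valid F g l ∧ lval g l = 1 ∧ l ≠ [] := by
  refine ⟨[(1, orderOf g - 1), (1, 1)], ?_, ?_, by simp⟩
  · intro p hp
    rcases List.mem_cons.1 hp with rfl | hp
    · exact ⟨Subgroup.one_mem F, by omega, by omega⟩
    rcases List.mem_cons.1 hp with rfl | hp
    · exact ⟨Subgroup.one_mem F, by omega, by omega⟩
    · simp at hp
  · rw [lval_cons, lval_cons, lval_nil]
    have : g ^ (orderOf g - 1) * g ^ 1 = g ^ orderOf g := by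
      rw [← pow_add]; congr 1; omega
    simp only [one_mul, mul_one]
    rw [this]
    exact pow_orderOf_eq_one g

lemma exists_inv_list {l : List (H × ℕ)} (hl : Valid F g l) :
    ∃ l' : List (H × ℕ), Valid F g l' ∧ lval g l' = (lval g l)⁻¹ := by
  obtain ⟨lw, hw, hw1, hwne⟩ := exists_one_list (F := F) hm
  obtain ⟨l', hl', hval, _⟩ := exists_inv_mul_list l hl lw hw hwne
  exact ⟨l', hl', by rw [hval, hw1, mul_one]⟩

lemma exists_list_total (hgen : Subgroup.closure ((F : Set H) ∪ {g}) = ⊤) (h : H) :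
    ∃ l : List (H × ℕ), Valid F g l ∧ lval g l = h := by
  have hmem : h ∈ Subgroup.closure ((F : Set H) ∪ {g}) := by rw [hgen]; trivial
  induction hmem using Subgroup.closure_induction with
  | mem x hx =>
    rcases hx with hx | hx
    · refine ⟨[(x, 1), (1, orderOf g - 1)], ?_, ?_⟩
      · intro p hp
        rcases List.mem_cons.1 hp with rfl | hp
        · exact ⟨hx, by omega, by omega⟩
        rcases List.mem_cons.1 hp with rfl | hp
        · exact ⟨Subgroup.one_mem F, by omega, by omega⟩
        · simp at hp
      · rw [lval_cons, lval_cons, lval_nil]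
        have : g ^ 1 * g ^ (orderOf g - 1) = g ^ orderOf g := by
          rw [← pow_add]; congr 1; omega
        simp only [one_mul, mul_one, mul_assoc]
        rw [this, pow_orderOf_eq_one g, mul_one]
    · simp only [Set.mem_singleton_iff] at hx
      subst hx
      refine ⟨[(1, 1)], ?_, by simp [lval_cons]⟩
      intro p hp
      rcases List.mem_cons.1 hp with rfl | hp
      · exact ⟨Subgroup.one_mem F, by omega, by omega⟩
      · simp at hp
  | one => exact ⟨[], by intro p hp; simp at hp, rfl⟩
  | mul x y _ _ hx hy =>
    obtain ⟨l₁, h₁, e₁⟩ := hx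
    obtain ⟨l₂, h₂, e₂⟩ := hy
    exact ⟨l₁ ++ l₂, valid_append h₁ h₂, by rw [lval_append, e₁, e₂]⟩
  | inv x _ hx =>
    obtain ⟨l, h₁, e₁⟩ := hx
    obtain ⟨l', h₂, e₂⟩ := exists_inv_list hm h₁
    exact ⟨l', h₂, by rw [e₂, e₁]⟩

end total

end WAaux
namespace WAaux

section part2

variable {H : Type*} [Group H] {F : Subgroup H} {g : H}

section withtotal

variable (hm : 2 ≤ orderOf g) (hgen : Subgroup.closure ((F : Set H) ∪ {g}) = ⊤)
include hm hgen

lemma repSet_nonempty (h : H) : (repSet F g h).Nonempty := by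
  obtain ⟨l, hl, hv⟩ := exists_list_total hm hgen h
  exact ⟨l.length, mem_repSet_iff.2 ⟨l, hl, hv, rfl⟩⟩

lemma exists_min_list (h : H) :
    ∃ l : List (H × ℕ), Valid F g l ∧ lval g l = h ∧ l.length = repLength F g h :=
  mem_repSet_iff.1 (Nat.sInf_mem (repSet_nonempty hm hgen h))

lemma repLength_eq_zero_iff (h : H) : repLength F g h = 0 ↔ h = 1 := by
  constructor
  · intro h0
    obtain ⟨l, _, hv, hlen⟩ := exists_min_list hm hgen h
    rw [h0, List.length_eq_zero_iff] at hlen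
    rw [← hv, hlen, lval_nil]
  · rintro rfl
    exact repLength_one F g

lemma repLength_mul_le (x y : H) :
    repLength F g (x * y) ≤ repLength F g x + repLength F g y := by
  obtain ⟨l₁, h₁, e₁, n₁⟩ := exists_min_list hm hgen x
  obtain ⟨l₂, h₂, e₂, n₂⟩ := exists_min_list hm hgen y
  have := repLength_le (valid_append h₁ h₂)
  rw [lval_append, e₁, e₂] at this
  simpa [n₁, n₂] using this

lemma repLength_inv_mul_le {k w : H} (hw : 1 ≤ repLength F g w) :
    repLength F g (k⁻¹ * w) ≤ repLength F g k + repLength F g w := by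
  obtain ⟨l, hl, e, nl⟩ := exists_min_list hm hgen k
  obtain ⟨lw, hlw, ew, nw⟩ := exists_min_list hm hgen w
  have hne : lw ≠ [] := by
    intro hnil
    rw [hnil] at nw
    simp at nw
    omega
  obtain ⟨l', hl', e', n'⟩ := exists_inv_mul_list l hl lw hlw hne
  have := repLength_le hl'
  rw [e', e, ew] at this
  rw [n', nl, nw] at this
  exact this

end withtotal

lemma finite_bounded (hF : (F : Set H).Finite) :
    ∀ n : ℕ, {h : H | ∃ l : List (H × ℕ), Valid F g l ∧ l.length ≤ n ∧ lval g l = h}.Finite := by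
  intro n
  induction n with
  | zero =>
    refine Set.Finite.subset (Set.finite_singleton 1) ?_
    rintro h ⟨l, _, hlen, hv⟩
    rw [Nat.le_zero, List.length_eq_zero_iff] at hlen
    rw [← hv, hlen, lval_nil]
    rfl
  | succ n ihn =>
    refine Set.Finite.subset (ihn.union (Set.Finite.image
      (fun q : H × ℕ × H => q.1 * g ^ q.2.1 * q.2.2)
      ((hF.prod ((Set.finite_Iio (orderOf g)).prod ihn))))) ?_
    rintro h ⟨l, hl, hlen, hv⟩
    rcases l with _ | ⟨p, t⟩
    · exact Or.inl ⟨[], by intro x hx; simp at hx, by simp, hv⟩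
    · refine Or.inr ⟨⟨p.1, p.2, lval g t⟩, ?_, ?_⟩
      · have hp := hl p List.mem_cons_self
        refine ⟨hp.1, hp.2.2, ⟨t, fun x hx => hl x (List.mem_cons_of_mem _ hx), ?_, rfl⟩⟩
        simp at hlen
        omega
      · rw [← hv, lval_cons]

end part2

section quot

variable {H : Type*} [Group H] (F : Subgroup H) (g : H)

noncomputable def qlen : Quotient (lenSetoid F g) → ℕ :=
  Quotient.lift (repLength F g) (fun _ _ h => h)

@[simp] lemma qlen_mk (h : H) :
    qlen F g (Quotient.mk (lenSetoid F g) h) = repLength F g h := rfl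

lemma qlen_injective : Function.Injective (qlen F g) := by
  intro a b
  induction a using Quotient.ind
  induction b using Quotient.ind
  exact fun h => Quotient.sound h

lemma mk_eq_mk_iff (a b : H) :
    Quotient.mk (lenSetoid F g) a = Quotient.mk (lenSetoid F g) b ↔
      repLength F g a = repLength F g b :=
  ⟨Quotient.exact, fun h => Quotient.sound h⟩

lemma mem_lenClasses_iff (C : Quotient (lenSetoid F g)) (n : ℕ) :
    C ∈ lenClasses F g n ↔ qlen F g C ≤ n := by
  constructor
  · rintro ⟨h, rfl, hle⟩
    exact hle
  · intro hle
    obtain ⟨h, rfl⟩ := Quotient.exists_rep C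
    exact ⟨h, rfl, hle⟩

end quot

end WAaux
theorem stmt6 (H : Type*) [Group H] [Infinite H] (F : Subgroup H) (hF : (F : Set H).Finite)
    (g : H) (hg : IsOfFinOrder g)
    (hgen : Subgroup.closure ((F : Set H) ∪ {g}) = ⊤) :
    WeaklyAmenable H ∧
    (∀ C : Quotient (lenSetoid F g), {h : H | Quotient.mk (lenSetoid F g) h = C}.Finite) ∧
    AppropriateRel (lenSetoid F g) ∧
    (∀ h : H, classBound (lenSetoid F g) h (2 * repLength F g h + 2)) ∧
    (∀ n, (lenClasses F g n).Finite) ∧ Monotone (lenClasses F g) ∧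
    (⋃ n, lenClasses F g n) = Set.univ ∧
    (∀ k : H, Filter.Tendsto (fun n =>
      (({C | C ∈ lenClasses F g n ∧ ∀ h : H, Quotient.mk (lenSetoid F g) h = C →
          Quotient.mk (lenSetoid F g) (k * h) ∈ lenClasses F g n}.ncard : ℝ)) /
        ((lenClasses F g n).ncard : ℝ)) Filter.atTop (nhds 1)) := by
  classical
  -- the order of `g` is at least 2
  have hm : 2 ≤ orderOf g := by
    by_contra hlt
    push_neg at hlt
    have h1 : orderOf g = 1 := by have := hg.orderOf_pos; omega
    have hg1 : g = 1 := orderOf_eq_one_iff.mp h1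
    have hcup : ((F : Set H) ∪ {g}) = (F : Set H) := by
      rw [hg1]
      refine Set.union_eq_self_of_subset_right ?_
      intro x hx
      simp only [Set.mem_singleton_iff] at hx
      subst hx
      exact Subgroup.one_mem F
    rw [hcup, Subgroup.closure_eq] at hgen
    have huf : (Set.univ : Set H).Finite := by
      have : (F : Set H) = (Set.univ : Set H) := by rw [hgen]; rfl
      rwa [this] at hF
    exact Set.infinite_univ huf
  -- basic facts about `repLength`
  have hsub : ∀ x y : H, repLength F g (x * y) ≤ repLength F g x + repLength F g y :=
    WAaux.repLength_mul_le hm hgen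
  have hinv : ∀ k w : H, 1 ≤ repLength F g w →
      repLength F g (k⁻¹ * w) ≤ repLength F g k + repLength F g w :=
    fun k w hw => WAaux.repLength_inv_mul_le hm hgen hw
  -- finiteness of balls
  have hfinle : ∀ n : ℕ, {h : H | repLength F g h ≤ n}.Finite := by
    intro n
    refine (WAaux.finite_bounded (g := g) hF n).subset ?_
    intro h hh
    simp only [Set.mem_setOf_eq] at hh
    obtain ⟨l, hl, hv, hlen⟩ := WAaux.exists_min_list hm hgen h
    exact ⟨l, hl, by omega, hv⟩
  -- fibers of the quotient map are finite
  have hfiber : ∀ C : Quotient (lenSetoid F g),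
      {h : H | Quotient.mk (lenSetoid F g) h = C}.Finite := by
    intro C
    obtain ⟨h₀, rfl⟩ := Quotient.exists_rep C
    refine (hfinle (repLength F g h₀)).subset ?_
    intro h hh
    simp only [Set.mem_setOf_eq] at hh ⊢
    rw [WAaux.mk_eq_mk_iff] at hh
    omega
  -- the quotient is infinite
  have hinfQ : Infinite (Quotient (lenSetoid F g)) := by
    by_contra hfin
    rw [not_infinite_iff_finite] at hfin
    have huf : (Set.univ : Set H).Finite := by
      have he : (Set.univ : Set H) =
          ⋃ C : Quotient (lenSetoid F g), {h | Quotient.mk (lenSetoid F g) h = C} := by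
        ext h
        simp only [Set.mem_univ, Set.mem_iUnion, Set.mem_setOf_eq, true_iff]
        exact ⟨_, rfl⟩
      rw [he]
      exact Set.finite_iUnion hfiber
    exact Set.infinite_univ huf
  -- lenClasses facts
  have hlenC : ∀ (C : Quotient (lenSetoid F g)) (n : ℕ),
      C ∈ lenClasses F g n ↔ WAaux.qlen F g C ≤ n := fun C n => WAaux.mem_lenClasses_iff F g C n
  have hmono : Monotone (lenClasses F g) := by
    intro a b hab C hC
    rw [hlenC] at hC ⊢
    omega
  have hfinC : ∀ n, (lenClasses F g n).Finite := by
    intro n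
    refine ((hfinle n).image (Quotient.mk (lenSetoid F g))).subset ?_
    rintro C ⟨h, rfl, hle⟩
    exact ⟨h, hle, rfl⟩
  have hunion : (⋃ n, lenClasses F g n) = Set.univ := by
    ext C
    simp only [Set.mem_iUnion, Set.mem_univ, iff_true]
    exact ⟨WAaux.qlen F g C, (hlenC C _).2 le_rfl⟩
  -- class bound
  have hcb : ∀ k : H, classBound (lenSetoid F g) k (2 * repLength F g k + 2) := by
    intro k C
    set L := repLength F g k with hL
    set ℓ := WAaux.qlen F g C with hℓ
    have hsubT : {C' | ∃ h, Quotient.mk (lenSetoid F g) h = C ∧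
          Quotient.mk (lenSetoid F g) (k * h) = C'} ⊆
        WAaux.qlen F g ⁻¹' ↑(insert 0 (Finset.Icc (ℓ - L) (ℓ + L))) := by
      rintro C' ⟨h, hC, rfl⟩
      have hh : repLength F g h = ℓ := by rw [hℓ, ← hC]; rfl
      simp only [Set.mem_preimage, Finset.coe_insert, Set.mem_insert_iff, Finset.mem_coe,
        Finset.mem_Icc, WAaux.qlen_mk]
      rcases Nat.eq_zero_or_pos (repLength F g (k * h)) with h0 | hpos
      · exact Or.inl h0
      · right
        have hub : repLength F g (k * h) ≤ L + ℓ := by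
          have := hsub k h
          omega
        have hlb : ℓ ≤ L + repLength F g (k * h) := by
          have h2 := hinv k (k * h) hpos
          rw [inv_mul_cancel_left] at h2
          omega
        omega
    calc {C' | ∃ h, Quotient.mk (lenSetoid F g) h = C ∧
            Quotient.mk (lenSetoid F g) (k * h) = C'}.encard
        = (WAaux.qlen F g '' {C' | ∃ h, Quotient.mk (lenSetoid F g) h = C ∧
            Quotient.mk (lenSetoid F g) (k * h) = C'}).encard :=
          ((WAaux.qlen_injective F g).injOn.encard_image).symm
      _ ≤ (↑(insert 0 (Finset.Icc (ℓ - L) (ℓ + L))) : Set ℕ).encard :=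
          Set.encard_mono (Set.image_subset_iff.2 hsubT)
      _ = ((insert 0 (Finset.Icc (ℓ - L) (ℓ + L))).card : ℕ∞) :=
          Set.encard_coe_eq_coe_finsetCard _
      _ ≤ ((2 * L + 2 : ℕ) : ℕ∞) := by
          have h1 : (insert 0 (Finset.Icc (ℓ - L) (ℓ + L))).card ≤ 2 * L + 2 := by
            refine le_trans (Finset.card_insert_le _ _) ?_
            rw [Nat.card_Icc]
            omega
          exact_mod_cast h1
  -- counting
  set cnt : ℕ → ℕ := fun n => (lenClasses F g n).ncard with hcnt
  have hcpos : ∀ n, 0 < cnt n := by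
    intro n
    refine (Set.ncard_pos (hfinC n)).2 ⟨Quotient.mk (lenSetoid F g) 1, ?_⟩
    exact ⟨1, rfl, by rw [WAaux.repLength_one]; omega⟩
  have hcmono : Monotone cnt := fun a b hab => Set.ncard_le_ncard (hmono hab) (hfinC b)
  have hctop : Filter.Tendsto cnt Filter.atTop Filter.atTop := by
    refine Filter.tendsto_atTop_atTop_of_monotone hcmono ?_
    intro N
    obtain ⟨B, -, hBcard⟩ := Set.infinite_univ.exists_subset_card_eq
      (α := Quotient (lenSetoid F g)) N
    refine ⟨B.sup (WAaux.qlen F g), ?_⟩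
    have hBsub : (B : Set (Quotient (lenSetoid F g))) ⊆ lenClasses F g (B.sup (WAaux.qlen F g)) := by
      intro C hC
      rw [hlenC]
      exact Finset.le_sup hC
    calc N = B.card := hBcard.symm
      _ = (B : Set (Quotient (lenSetoid F g))).ncard := (Set.ncard_coe_finset B).symm
      _ ≤ cnt (B.sup (WAaux.qlen F g)) := Set.ncard_le_ncard hBsub (hfinC _)
  have hctopR : Filter.Tendsto (fun n => (cnt n : ℝ)) Filter.atTop Filter.atTop :=
    tendsto_natCast_atTop_atTop.comp hctop
  -- the main limit statement
  have hT : ∀ k : H, Filter.Tendsto (fun n =>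
      (({C | C ∈ lenClasses F g n ∧ ∀ h : H, Quotient.mk (lenSetoid F g) h = C →
          Quotient.mk (lenSetoid F g) (k * h) ∈ lenClasses F g n}.ncard : ℝ)) /
        ((lenClasses F g n).ncard : ℝ)) Filter.atTop (nhds 1) := by
    intro k
    set L := repLength F g k with hL
    set good : ℕ → Set (Quotient (lenSetoid F g)) := fun n =>
      {C | C ∈ lenClasses F g n ∧ ∀ h : H, Quotient.mk (lenSetoid F g) h = C →
        Quotient.mk (lenSetoid F g) (k * h) ∈ lenClasses F g n} with hgood
    have hgsub : ∀ n, good n ⊆ lenClasses F g n := fun n C hC => hC.1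
    have hgfin : ∀ n, (good n).Finite := fun n => (hfinC n).subset (hgsub n)
    have hgle : ∀ n, (good n).ncard ≤ cnt n := fun n => Set.ncard_le_ncard (hgsub n) (hfinC n)
    have hkey : ∀ n, L ≤ n → cnt n ≤ (good n).ncard + L := by
      intro n hLn
      have hcover : lenClasses F g n ⊆
          good n ∪ WAaux.qlen F g ⁻¹' (Set.Ioc (n - L) n) := by
        intro C hC
        rcases le_or_gt (WAaux.qlen F g C) (n - L) with hsm | hbig
        · left
          refine ⟨hC, ?_⟩
          intro h hh
          have hh' : repLength F g h = WAaux.qlen F g C := by rw [← hh]; rfl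
          rw [hlenC, WAaux.qlen_mk]
          have := hsub k h
          omega
        · right
          exact ⟨hbig, (hlenC C n).1 hC⟩
      have hpre : (WAaux.qlen F g ⁻¹' (Set.Ioc (n - L) n)).ncard ≤ L := by
        have hfpre : (WAaux.qlen F g ⁻¹' (Set.Ioc (n - L) n)).Finite :=
          Set.Finite.preimage (WAaux.qlen_injective F g).injOn (Set.finite_Ioc _ _)
        calc (WAaux.qlen F g ⁻¹' (Set.Ioc (n - L) n)).ncard
            = (WAaux.qlen F g '' (WAaux.qlen F g ⁻¹' (Set.Ioc (n - L) n))).ncard :=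
              (Set.ncard_image_of_injective _ (WAaux.qlen_injective F g)).symm
          _ ≤ (Set.Ioc (n - L) n).ncard :=
              Set.ncard_le_ncard (Set.image_preimage_subset _ _) (Set.finite_Ioc _ _)
          _ ≤ L := by
              rw [← Finset.coe_Ioc, Set.ncard_coe_finset, Nat.card_Ioc]
              omega
      calc cnt n ≤ (good n ∪ WAaux.qlen F g ⁻¹' (Set.Ioc (n - L) n)).ncard :=
            Set.ncard_le_ncard hcover ((hgfin n).union
              (Set.Finite.preimage (WAaux.qlen_injective F g).injOn (Set.finite_Ioc _ _)))
        _ ≤ (good n).ncard + (WAaux.qlen F g ⁻¹' (Set.Ioc (n - L) n)).ncard :=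
            Set.ncard_union_le _ _
        _ ≤ (good n).ncard + L := by omega
    -- squeeze
    have hlow : Filter.Tendsto (fun n => 1 - (L : ℝ) / (cnt n : ℝ)) Filter.atTop (nhds 1) := by
      have : Filter.Tendsto (fun n => (L : ℝ) / (cnt n : ℝ)) Filter.atTop (nhds 0) :=
        Filter.Tendsto.div_atTop tendsto_const_nhds hctopR
      simpa using tendsto_const_nhds.sub this
    refine tendsto_of_tendsto_of_tendsto_of_le_of_le' hlow tendsto_const_nhds ?_ ?_
    · filter_upwards [Filter.eventually_ge_atTop L] with n hLn
      have hcR : (0 : ℝ) < (cnt n : ℝ) := by exact_mod_cast hcpos n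
      have h1 : (cnt n : ℝ) ≤ ((good n).ncard : ℝ) + L := by exact_mod_cast hkey n hLn
      have he : (1 : ℝ) - (L : ℝ) / (cnt n : ℝ) = ((cnt n : ℝ) - L) / (cnt n : ℝ) := by
        field_simp
      rw [he]
      exact (div_le_div_iff_of_pos_right hcR).2 (by linarith)
    · filter_upwards with n
      rw [div_le_one (by exact_mod_cast hcpos n)]
      exact_mod_cast hgle n
  -- assemble
  refine ⟨?_, hfiber, ⟨hinfQ, fun k => ⟨2 * repLength F g k + 2, hcb k⟩⟩, hcb, hfinC, hmono,
    hunion, hT⟩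
  refine Or.inr ⟨lenSetoid F g, fun n => (hfinC n).toFinset,
    ⟨hinfQ, fun k => ⟨2 * repLength F g k + 2, hcb k⟩⟩, ?_, ?_, ?_⟩
  · intro a b hab
    exact Set.Finite.toFinset_subset_toFinset.2 (hmono hab)
  · intro C
    exact ⟨WAaux.qlen F g C, (hfinC _).mem_toFinset.2 ((hlenC C _).2 le_rfl)⟩
  · intro k
    have hfun : ∀ n, ({C | C ∈ (hfinC n).toFinset ∧ ∀ h : H,
        Quotient.mk (lenSetoid F g) h = C →
          Quotient.mk (lenSetoid F g) (k * h) ∈ (hfinC n).toFinset} : Set _) =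
        {C | C ∈ lenClasses F g n ∧ ∀ h : H, Quotient.mk (lenSetoid F g) h = C →
          Quotient.mk (lenSetoid F g) (k * h) ∈ lenClasses F g n} := by
      intro n
      ext C
      simp [Set.Finite.mem_toFinset]
    have hcard : ∀ n, ((hfinC n).toFinset).card = (lenClasses F g n).ncard :=
      fun n => (Set.ncard_eq_toFinset_card _ (hfinC n)).symm
    simp only [hfun, hcard]
    exact hT k
end

section
/- Every finitely generated group is weakly amenable. In particular, for an infinite group G generated by a finite set S = {g₁,…,g_n}, the equivalence relation h₁ ∼ h₂ iff |h₁| = |h₂| — where |h| is the word-length of h with respect to the symbols g_i, g_i⁻¹ — witnesses weak amenability of G. -/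
open Filter Set

/-- Word length of `h` with respect to the symbols `s` and `s⁻¹` for `s ∈ S`. -/
noncomputable def wordLength {G : Type*} [Group G] (S : Set G) (h : G) : ℕ :=
  sInf {n | ∃ l : List G, l.length = n ∧ (∀ x ∈ l, x ∈ S ∨ x⁻¹ ∈ S) ∧ l.prod = h}

section WL
variable {G : Type*} [Group G] {S : Finset G}

lemma wl_exists (hS : Subgroup.closure (S : Set G) = ⊤) (h : G) :
    ∃ l : List G, l.length = wordLength (S : Set G) h ∧
      (∀ x ∈ l, x ∈ (S : Set G) ∨ x⁻¹ ∈ (S : Set G)) ∧ l.prod = h := by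
  have hmem : h ∈ (Subgroup.closure (S : Set G)).toSubmonoid := by
    rw [hS]; trivial
  rw [Subgroup.closure_toSubmonoid] at hmem
  obtain ⟨l, hl1, hl2⟩ := Submonoid.exists_list_of_mem_closure hmem
  have hne : {n | ∃ l : List G, l.length = n ∧
      (∀ x ∈ l, x ∈ (S : Set G) ∨ x⁻¹ ∈ (S : Set G)) ∧ l.prod = h}.Nonempty := by
    refine ⟨l.length, l, rfl, fun x hx => ?_, hl2⟩
    rcases hl1 x hx with h | h
    · exact Or.inl h
    · exact Or.inr (by simpa using h)
  exact Nat.sInf_mem hne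

lemma wl_le {l : List G} (hl : ∀ x ∈ l, x ∈ (S : Set G) ∨ x⁻¹ ∈ (S : Set G)) :
    wordLength (S : Set G) l.prod ≤ l.length :=
  Nat.sInf_le ⟨l, rfl, hl, rfl⟩

lemma wl_one : wordLength (S : Set G) 1 = 0 :=
  Nat.le_zero.mp (by simpa using wl_le (S := S) (l := []) (by simp))

lemma wl_mul (hS : Subgroup.closure (S : Set G) = ⊤) (g h : G) :
    wordLength (S : Set G) (g * h) ≤ wordLength (S : Set G) g + wordLength (S : Set G) h := by
  obtain ⟨lg, hlg1, hlg2, hlg3⟩ := wl_exists hS g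
  obtain ⟨lh, hlh1, hlh2, hlh3⟩ := wl_exists hS h
  have := wl_le (S := S) (l := lg ++ lh) (by
    intro x hx; rcases List.mem_append.mp hx with h | h
    · exact hlg2 x h
    · exact hlh2 x h)
  simpa [hlg1, hlh1, hlg3, hlh3] using this

lemma wl_inv (hS : Subgroup.closure (S : Set G) = ⊤) (g : G) :
    wordLength (S : Set G) g⁻¹ ≤ wordLength (S : Set G) g := by
  obtain ⟨l, hl1, hl2, hl3⟩ := wl_exists hS g
  have := wl_le (S := S) (l := (l.map fun x => x⁻¹).reverse) (by
    intro x hx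
    simp only [List.mem_reverse, List.mem_map] at hx
    obtain ⟨y, hy, rfl⟩ := hx
    rcases hl2 y hy with h | h
    · exact Or.inr (by simpa using h)
    · exact Or.inl h)
  rw [← List.prod_inv_reverse, hl3] at this
  simpa [hl1] using this

lemma wl_triangle (hS : Subgroup.closure (S : Set G) = ⊤) (g h : G) :
    wordLength (S : Set G) h ≤
      wordLength (S : Set G) g + wordLength (S : Set G) (g * h) := by
  have h1 : wordLength (S : Set G) (g⁻¹ * (g * h)) ≤
      wordLength (S : Set G) g⁻¹ + wordLength (S : Set G) (g * h) := wl_mul hS _ _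
  have h2 := wl_inv hS g
  simp only [inv_mul_cancel_left] at h1
  omega

lemma ball_finite (hS : Subgroup.closure (S : Set G) = ⊤) (n : ℕ) :
    {h : G | wordLength (S : Set G) h ≤ n}.Finite := by
  classical
  set T : Set G := (S : Set G) ∪ (S : Set G)⁻¹ with hT
  have hTfin : T.Finite := S.finite_toSet.union (S.finite_toSet.inv)
  haveI : Finite ↥T := hTfin.to_subtype
  have : {h : G | wordLength (S : Set G) h ≤ n} ⊆
      (fun l : List ↥T => (l.map Subtype.val).prod) '' {l : List ↥T | l.length ≤ n} := by
    intro h hh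
    obtain ⟨l, hl1, hl2, hl3⟩ := wl_exists hS h
    refine ⟨l.pmap (fun x hx => (⟨x, hx⟩ : ↥T)) (fun x hx => ?_), by
      simpa [List.length_pmap] using hl1.le.trans hh, ?_⟩
    · rcases hl2 x hx with h' | h'
      · exact Or.inl h'
      · exact Or.inr (by simpa using h')
    · simp only [List.map_pmap]
      rw [List.pmap_eq_map]
      simpa using hl3
  exact Finite.subset ((List.finite_length_le ↥T n).image _) this

lemma wl_pred (hS : Subgroup.closure (S : Set G) = ⊤) {m : ℕ} {h : G}
    (hh : wordLength (S : Set G) h = m + 1) : ∃ h' : G, wordLength (S : Set G) h' = m := by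
  obtain ⟨l, hl1, hl2, hl3⟩ := wl_exists hS h
  rw [hh] at hl1
  cases l with
  | nil => simp at hl1
  | cons a t =>
    have ha : wordLength (S : Set G) a ≤ 1 := by
      simpa using wl_le (S := S) (l := [a]) (by simpa using hl2 a (by simp))
    have hta : ∀ x ∈ t, x ∈ (S : Set G) ∨ x⁻¹ ∈ (S : Set G) :=
      fun x hx => hl2 x (List.mem_cons_of_mem a hx)
    have ht : wordLength (S : Set G) t.prod ≤ m := by
      have := wl_le (S := S) hta
      simp only [List.length_cons] at hl1
      omega
    have hge : m + 1 ≤ wordLength (S : Set G) a + wordLength (S : Set G) t.prod := by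
      have := wl_mul hS a t.prod
      rw [show a * t.prod = h by rw [← hl3]; simp, hh] at this
      exact this
    exact ⟨t.prod, by omega⟩

lemma wl_surj (hS : Subgroup.closure (S : Set G) = ⊤) [Infinite G] :
    Function.Surjective (wordLength (S : Set G)) := by
  have down : ∀ m : ℕ, (∃ h : G, wordLength (S : Set G) h = m) →
      ∀ k ≤ m, ∃ h : G, wordLength (S : Set G) h = k := by
    intro m
    induction m with
    | zero => intro hm k hk; simpa [Nat.le_zero.mp hk] using hm
    | succ m ih =>
      rintro ⟨h, hh⟩ k hk
      rcases Nat.eq_or_lt_of_le hk with rfl | hk'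
      · exact ⟨h, hh⟩
      · obtain ⟨h', hh'⟩ := wl_pred hS hh
        exact ih ⟨h', hh'⟩ k (by omega)
  intro n
  by_contra hcon
  push_neg at hcon
  have hball : ∀ h : G, wordLength (S : Set G) h ≤ n := by
    intro h
    by_contra hgt
    push_neg at hgt
    obtain ⟨h', hh'⟩ := down _ ⟨h, rfl⟩ n (by omega)
    exact hcon h' hh'
  have : (Set.univ : Set G).Finite :=
    (ball_finite hS n).subset (fun h _ => hball h)
  exact Set.infinite_univ this

end WL

lemma main_lemma {G : Type*} [Group G] (S : Finset G) [Infinite G]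
    (hS : Subgroup.closure (S : Set G) = ⊤) :
    ∃ A : ℕ → Finset (Quotient (Setoid.ker (wordLength (S : Set G)))),
      AppropriateRel (Setoid.ker (wordLength (S : Set G))) ∧
      WAWitness (Setoid.ker (wordLength (S : Set G))) A := by
  classical
  set f : G → ℕ := wordLength (S : Set G) with hf
  set r : Setoid G := Setoid.ker f with hr
  let φ : Quotient r → ℕ := Quotient.lift f (fun a b h => h)
  have hφmk : ∀ h : G, φ (Quotient.mk r h) = f h := fun h => rfl
  let e : ℕ → G := Function.surjInv (wl_surj hS)
  have he : ∀ n, f (e n) = n := fun n => Function.surjInv_eq (wl_surj hS) n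
  let σ : ℕ → Quotient r := fun n => Quotient.mk r (e n)
  have hφσ : ∀ n, φ (σ n) = n := fun n => he n
  have hσφ : ∀ C, σ (φ C) = C := by
    refine Quotient.ind (fun h => ?_)
    exact Quotient.sound (show f (e (f h)) = f h from he _)
  have σinj : Function.Injective σ := fun a b hab => by
    rw [← hφσ a, ← hφσ b, hab]
  set A : ℕ → Finset (Quotient r) := fun n => (Finset.range (n + 1)).image σ with hA
  have memA : ∀ (C : Quotient r) (n : ℕ), C ∈ A n ↔ φ C ≤ n := by
    intro C n
    simp only [hA, Finset.mem_image, Finset.mem_range]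
    constructor
    · rintro ⟨j, hj, rfl⟩; rw [hφσ]; omega
    · intro h; exact ⟨φ C, by omega, hσφ C⟩
  have cardA : ∀ n, (A n).card = n + 1 := by
    intro n
    rw [hA]
    rw [Finset.card_image_of_injective _ σinj, Finset.card_range]
  have hinf : Infinite (Quotient r) :=
    Infinite.of_surjective φ (fun n => ⟨σ n, hφσ n⟩)
  refine ⟨A, ⟨hinf, ?_⟩, ?_, ?_, ?_⟩
  · -- class bounds
    intro g
    refine ⟨2 * f g + 1, fun C => ?_⟩
    have hsub : {C' : Quotient r | ∃ h : G,
        Quotient.mk r h = C ∧ Quotient.mk r (g * h) = C'} ⊆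
        σ '' ↑(Finset.Icc (φ C - f g) (φ C + f g)) := by
      rintro C' ⟨h, hh, rfl⟩
      have hC : φ C = f h := by rw [← hh]; rfl
      have h1 : f (g * h) ≤ f g + f h := wl_mul hS g h
      have h2 : f h ≤ f g + f (g * h) := wl_triangle hS g h
      exact ⟨f (g * h), by simp only [Finset.coe_Icc, Set.mem_Icc]; omega,
        hσφ (Quotient.mk r (g * h))⟩
    calc {C' : Quotient r | ∃ h : G,
        Quotient.mk r h = C ∧ Quotient.mk r (g * h) = C'}.encard
        ≤ (σ '' ↑(Finset.Icc (φ C - f g) (φ C + f g))).encard := Set.encard_mono hsub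
      _ = (↑(Finset.Icc (φ C - f g) (φ C + f g)) : Set ℕ).encard :=
          (σinj.injOn).encard_image
      _ = ((Finset.Icc (φ C - f g) (φ C + f g)).card : ℕ∞) :=
          Set.encard_coe_eq_coe_finsetCard _
      _ ≤ ((2 * f g + 1 : ℕ) : ℕ∞) := by
          refine Nat.cast_le.mpr ?_
          rw [Nat.card_Icc]; omega
  · -- monotone
    intro m n hmn
    exact Finset.image_subset_image (Finset.range_subset_range.mpr (by omega))
  · -- covers
    intro C
    exact ⟨φ C, (memA C (φ C)).mpr le_rfl⟩
  · -- Følner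
    intro g
    set k := f g with hk
    set good : ℕ → Set (Quotient r) := fun n => {C : Quotient r | C ∈ A n ∧
      ∀ h : G, Quotient.mk r h = C → Quotient.mk r (g * h) ∈ A n} with hgood
    have hfin : ∀ n, (good n).Finite :=
      fun n => (A n).finite_toSet.subset (fun C hC => hC.1)
    have hupper : ∀ n, (good n).ncard ≤ n + 1 := by
      intro n
      calc (good n).ncard ≤ (↑(A n) : Set (Quotient r)).ncard :=
            Set.ncard_le_ncard (fun C hC => hC.1) (A n).finite_toSet
        _ = n + 1 := by rw [Set.ncard_coe_finset, cardA]
    have hlower : ∀ n, k ≤ n → (n + 1 - k : ℕ) ≤ (good n).ncard := by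
      intro n hn
      have hsub : σ '' ↑(Finset.range (n + 1 - k)) ⊆ good n := by
        rintro C ⟨j, hj, rfl⟩
        simp only [Finset.coe_range, Set.mem_Iio] at hj
        refine ⟨(memA _ _).mpr (by rw [hφσ]; omega), fun h hh => ?_⟩
        refine (memA _ _).mpr ?_
        have hfh : f h = j := by
          have : φ (Quotient.mk r h) = φ (σ j) := by rw [hh]
          rw [hφσ] at this; exact this
        have h1 : f (g * h) ≤ f g + f h := wl_mul hS g h
        rw [hφmk]; omega
      calc (n + 1 - k : ℕ) = (σ '' ↑(Finset.range (n + 1 - k))).ncard := by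
            rw [Set.ncard_image_of_injective _ σinj, Set.ncard_coe_finset,
              Finset.card_range]
        _ ≤ (good n).ncard := Set.ncard_le_ncard hsub (hfin n)
    have hApos : ∀ n : ℕ, (0 : ℝ) < ((A n).card : ℝ) := by
      intro n; rw [cardA]; positivity
    have hcardR : ∀ n : ℕ, ((A n).card : ℝ) = (n : ℝ) + 1 := by
      intro n; rw [cardA]; push_cast; ring
    refine tendsto_of_tendsto_of_tendsto_of_le_of_le'
      (g := fun n : ℕ => 1 - (k : ℝ) * (1 / ((n : ℝ) + 1))) (h := fun _ => 1) ?_ ?_ ?_ ?_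
    · have := tendsto_one_div_add_atTop_nhds_zero_nat.const_mul (k : ℝ)
      have h2 := (tendsto_const_nhds (α := ℕ) (f := atTop) (x := (1 : ℝ))).sub this
      simpa using h2
    · exact tendsto_const_nhds
    · filter_upwards [eventually_ge_atTop k] with n hn
      have hnum : ((n + 1 - k : ℕ) : ℝ) = (n : ℝ) + 1 - (k : ℝ) := by
        push_cast [Nat.cast_sub (by omega : k ≤ n + 1)]; ring
      have hle : ((n : ℝ) + 1 - (k : ℝ)) ≤ ((good n).ncard : ℝ) := by
        rw [← hnum]; exact_mod_cast hlower n hn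
      rw [hcardR]
      have hpos : (0 : ℝ) < (n : ℝ) + 1 := by positivity
      have heq : 1 - (k : ℝ) * (1 / ((n : ℝ) + 1)) = ((n : ℝ) + 1 - (k : ℝ)) / ((n : ℝ) + 1) := by
        field_simp
      rw [heq]
      gcongr
    · filter_upwards with n
      rw [div_le_one (hApos n), hcardR]
      calc ((good n).ncard : ℝ) ≤ ((n + 1 : ℕ) : ℝ) := by exact_mod_cast hupper n
        _ = (n : ℝ) + 1 := by push_cast; ring

theorem stmt8 (G : Type*) [Group G] :
    (Group.FG G → WeaklyAmenable G) ∧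
    (∀ S : Finset G, Infinite G → Subgroup.closure (S : Set G) = ⊤ →
      ∃ A : ℕ → Finset (Quotient (Setoid.ker (wordLength (S : Set G)))),
        AppropriateRel (Setoid.ker (wordLength (S : Set G))) ∧
        WAWitness (Setoid.ker (wordLength (S : Set G))) A) := by
  constructor
  · intro hFG
    rcases finite_or_infinite G with hfin | hinf
    · exact Or.inl hfin
    · obtain ⟨Sset, hcl, hfin2⟩ := Group.fg_iff.mp hFG
      have hS : Subgroup.closure ((hfin2.toFinset : Finset G) : Set G) = ⊤ := by
        rwa [hfin2.coe_toFinset]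
      obtain ⟨A, h1, h2⟩ := main_lemma hfin2.toFinset hS
      exact Or.inr ⟨_, A, h1, h2⟩
  · intro S hinf hS
    exact main_lemma S hS
end

section
/- If G is a countable group which has a Cayley graph of infinite diameter — i.e., there is a generating set S of G such that the associated word-length function on G is unbounded — then G is weakly amenable. -/
open Filter Set

section Aux

variable {G : Type*} [Group G] {S : Set G}

lemma wordLength_set_nonempty (hgen : Subgroup.closure S = ⊤) (h : G) :
    {n | ∃ l : List G, l.length = n ∧ (∀ x ∈ l, x ∈ S ∨ x⁻¹ ∈ S) ∧ l.prod = h}.Nonempty := by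
  have hmem : h ∈ (Subgroup.closure S).toSubmonoid := by rw [hgen]; trivial
  rw [Subgroup.closure_toSubmonoid] at hmem
  obtain ⟨l, hl, hp⟩ := Submonoid.exists_list_of_mem_closure hmem
  refine ⟨l.length, l, rfl, fun x hx => ?_, hp⟩
  rcases hl x hx with h | h
  · exact Or.inl h
  · exact Or.inr h

lemma wordLength_spec (hgen : Subgroup.closure S = ⊤) (h : G) :
    ∃ l : List G, l.length = wordLength S h ∧ (∀ x ∈ l, x ∈ S ∨ x⁻¹ ∈ S) ∧ l.prod = h :=
  Nat.sInf_mem (wordLength_set_nonempty hgen h)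

lemma wordLength_le {h : G} {l : List G} (hl : ∀ x ∈ l, x ∈ S ∨ x⁻¹ ∈ S) (hp : l.prod = h) :
    wordLength S h ≤ l.length := Nat.sInf_le ⟨l, rfl, hl, hp⟩

lemma wordLength_mul (hgen : Subgroup.closure S = ⊤) (g h : G) :
    wordLength S (g * h) ≤ wordLength S g + wordLength S h := by
  obtain ⟨l1, hl1, hm1, hp1⟩ := wordLength_spec hgen g
  obtain ⟨l2, hl2, hm2, hp2⟩ := wordLength_spec hgen h
  have := wordLength_le (h := g * h) (l := l1 ++ l2)
    (by intro x hx; rcases List.mem_append.mp hx with hx | hx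
        exacts [hm1 x hx, hm2 x hx])
    (by rw [List.prod_append, hp1, hp2])
  simpa [hl1, hl2] using this

lemma wordLength_inv_le (hgen : Subgroup.closure S = ⊤) (g : G) :
    wordLength S g⁻¹ ≤ wordLength S g := by
  obtain ⟨l, hl, hm, hp⟩ := wordLength_spec hgen g
  have := wordLength_le (h := g⁻¹) (l := (l.map (fun x => x⁻¹)).reverse)
    (by intro x hx
        simp only [List.mem_reverse, List.mem_map] at hx
        obtain ⟨y, hy, rfl⟩ := hx
        rcases hm y hy with h | h
        · exact Or.inr (by simpa using h)
        · exact Or.inl h)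
    (by rw [← List.prod_inv_reverse, hp])
  simpa [hl] using this

lemma wordLength_lower (hgen : Subgroup.closure S = ⊤) (g h : G) :
    wordLength S h ≤ wordLength S g + wordLength S (g * h) := by
  have h1 : wordLength S (g⁻¹ * (g * h)) ≤ wordLength S g⁻¹ + wordLength S (g * h) :=
    wordLength_mul hgen _ _
  have h2 := wordLength_inv_le hgen g
  simp only [inv_mul_cancel_left] at h1
  omega

end Aux

theorem stmt9 (G : Type*) [Group G] [Countable G] (S : Set G)
    (hgen : Subgroup.closure S = ⊤)
    (hdiam : ∀ N : ℕ, ∃ h : G, N ≤ wordLength S h) :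
    WeaklyAmenable G := by
  classical
  right
  set f : G → ℕ := wordLength S with hfdef
  have hmul : ∀ g h : G, f (g * h) ≤ f g + f h := wordLength_mul hgen
  have hlow : ∀ g h : G, f h ≤ f g + f (g * h) := wordLength_lower hgen
  set r : Setoid G := Setoid.ker f with hrdef
  have hker : ∀ a b : G, r.r a b ↔ f a = f b := fun a b => Iff.rfl
  set φ : Quotient r → ℕ := Quotient.lift f (fun _ _ h => h) with hφdef
  have hφmk : ∀ h : G, φ (Quotient.mk r h) = f h := fun _ => rfl
  have hφinj : Function.Injective φ := by
    intro C C'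
    induction C using Quotient.ind
    induction C' using Quotient.ind
    exact fun h => Quotient.sound h
  have hrange : (Set.range f).Infinite := by
    intro hfin
    obtain ⟨N, hN⟩ := hfin.bddAbove
    obtain ⟨h, hh⟩ := hdiam (N + 1)
    have : f h ≤ N := hN ⟨h, rfl⟩
    omega
  have hQinf : Infinite (Quotient r) := by
    have := hrange.to_subtype
    exact (Equiv.infinite_iff (Setoid.quotientKerEquivRange f)).mpr this
  -- the finite sets
  have hfin : ∀ n : ℕ, {C : Quotient r | φ C ≤ n}.Finite := by
    intro n
    have : {C : Quotient r | φ C ≤ n} = φ ⁻¹' (Set.Iic n) := rfl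
    rw [this]
    exact Set.Finite.preimage hφinj.injOn (Set.finite_Iic n)
  set A : ℕ → Finset (Quotient r) := fun n => (hfin n).toFinset with hAdef
  have hAmem : ∀ n (C : Quotient r), C ∈ A n ↔ φ C ≤ n := by
    intro n C; simp [hAdef, Set.Finite.mem_toFinset]
  have hAmono : Monotone A := by
    intro m n hmn
    intro C hC
    rw [hAmem] at hC ⊢
    omega
  have hone : ∀ n, Quotient.mk r 1 ∈ A n := by
    intro n
    rw [hAmem, hφmk]
    have : f 1 ≤ 0 := by
      simpa using wordLength_le (S := S) (h := (1 : G)) (l := []) (by simp) (by simp)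
    omega
  have hcardpos : ∀ n, 0 < (A n).card := fun n => Finset.card_pos.mpr ⟨_, hone n⟩
  -- cards tend to infinity
  have hcard_unbounded : ∀ m : ℕ, ∃ n, m ≤ (A n).card := by
    intro m
    obtain ⟨t, hts, htc⟩ := hrange.exists_subset_card_eq m
    rcases t.eq_empty_or_nonempty with rfl | hne
    · exact ⟨0, by simp [← htc]⟩
    · set n := t.max' hne with hn
      refine ⟨n, ?_⟩
      have hsub : t ⊆ (A n).image φ := by
        intro v hv
        obtain ⟨h, rfl⟩ := hts hv
        refine Finset.mem_image.mpr ⟨Quotient.mk r h, ?_, hφmk h⟩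
        rw [hAmem, hφmk]
        exact t.le_max' _ hv
      calc m = t.card := htc.symm
        _ ≤ ((A n).image φ).card := Finset.card_le_card hsub
        _ = (A n).card := Finset.card_image_of_injective _ hφinj
  have hcard_tendsto : Tendsto (fun n => ((A n).card : ℝ)) atTop atTop := by
    have hmono : Monotone (fun n => (A n).card) := fun a b hab => Finset.card_le_card (hAmono hab)
    exact tendsto_natCast_atTop_atTop.comp
      (tendsto_atTop_atTop_of_monotone hmono hcard_unbounded)
  refine ⟨r, A, ⟨hQinf, ?_⟩, hAmono, ?_, ?_⟩
  · -- classBound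
    intro g
    refine ⟨2 * f g + 1, fun C => ?_⟩
    set T : Set (Quotient r) :=
      {C' | ∃ h : G, Quotient.mk r h = C ∧ Quotient.mk r (g * h) = C'} with hTdef
    have hTsub : φ '' T ⊆ ↑(Finset.Icc (φ C - f g) (φ C + f g)) := by
      rintro v ⟨C', ⟨h, hh, rfl⟩, rfl⟩
      have hC : φ C = f h := by rw [← hh, hφmk]
      rw [hφmk, Finset.coe_Icc, Set.mem_Icc, hC]
      have h1 := hmul g h
      have h2 := hlow g h
      omega
    calc T.encard = (φ '' T).encard := (Set.InjOn.encard_image hφinj.injOn).symm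
      _ ≤ (↑(Finset.Icc (φ C - f g) (φ C + f g)) : Set ℕ).encard := Set.encard_mono hTsub
      _ = ((Finset.Icc (φ C - f g) (φ C + f g)).card : ℕ∞) :=
          Set.encard_coe_eq_coe_finsetCard _
      _ ≤ ((2 * f g + 1 : ℕ) : ℕ∞) := by
          rw [Nat.cast_le, Nat.card_Icc]
          omega
  · exact fun C => ⟨φ C, (hAmem _ _).mpr le_rfl⟩
  · -- Følner condition
    intro g
    set c : ℕ := f g + 1 with hcdef
    set Gs : ℕ → Set (Quotient r) := fun n =>
      {C : Quotient r | C ∈ A n ∧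
        ∀ h : G, Quotient.mk r h = C → Quotient.mk r (g * h) ∈ A n} with hGsdef
    have hGsub : ∀ n, Gs n ⊆ ↑(A n) := fun n C hC => hC.1
    have hGfin : ∀ n, (Gs n).Finite := fun n => (A n).finite_toSet.subset (hGsub n)
    have hupper : ∀ n, (Gs n).ncard ≤ (A n).card := by
      intro n
      rw [← Set.ncard_coe_finset (A n)]
      exact Set.ncard_le_ncard (hGsub n) (A n).finite_toSet
    have hlower : ∀ n, (A n).card ≤ (Gs n).ncard + c := by
      intro n
      set Good : Finset (Quotient r) := (A n).filter (fun C => φ C + f g ≤ n) with hGood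
      set Bad : Finset (Quotient r) := (A n).filter (fun C => ¬ (φ C + f g ≤ n)) with hBad
      have hsplit : Good.card + Bad.card = (A n).card := Finset.card_filter_add_card_filter_not _
      have hGoodsub : ↑Good ⊆ Gs n := by
        intro C hC
        simp only [hGood, Finset.coe_filter, Set.mem_setOf_eq] at hC
        refine ⟨hC.1, fun h hh => ?_⟩
        rw [hAmem, hφmk]
        have hC2 : φ C = f h := by rw [← hh, hφmk]
        have := hmul g h
        omega
      have hGoodcard : Good.card ≤ (Gs n).ncard := by
        rw [← Set.ncard_coe_finset Good]
        exact Set.ncard_le_ncard hGoodsub (hGfin n)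
      have hBadcard : Bad.card ≤ c := by
        have hmap : ∀ C ∈ Bad, φ C ∈ Finset.Icc (n - f g) n := by
          intro C hC
          simp only [hBad, Finset.mem_filter] at hC
          obtain ⟨hC1, hC2⟩ := hC
          rw [hAmem] at hC1
          rw [Finset.mem_Icc]
          omega
        calc Bad.card ≤ (Finset.Icc (n - f g) n).card :=
              Finset.card_le_card_of_injOn φ hmap (hφinj.injOn)
          _ ≤ c := by rw [Nat.card_Icc]; omega
      omega
    -- squeeze
    have hub : ∀ n : ℕ, ((Gs n).ncard : ℝ) / ((A n).card : ℝ) ≤ 1 := by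
      intro n
      rw [div_le_one (by exact_mod_cast hcardpos n)]
      exact_mod_cast hupper n
    have hlb : ∀ n : ℕ, 1 - (c : ℝ) / ((A n).card : ℝ) ≤ ((Gs n).ncard : ℝ) / ((A n).card : ℝ) := by
      intro n
      have hpos : (0 : ℝ) < ((A n).card : ℝ) := by exact_mod_cast hcardpos n
      have h1 : ((A n).card : ℝ) ≤ ((Gs n).ncard : ℝ) + c := by exact_mod_cast hlower n
      have h2 : (1 : ℝ) ≤ (((Gs n).ncard : ℝ) + c) / ((A n).card : ℝ) := by
        rw [le_div_iff₀ hpos, one_mul]; exact h1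
      rw [add_div] at h2
      linarith
    have hlim : Tendsto (fun n => 1 - (c : ℝ) / ((A n).card : ℝ)) atTop (nhds 1) := by
      have : Tendsto (fun n => (c : ℝ) / ((A n).card : ℝ)) atTop (nhds 0) :=
        Tendsto.div_atTop tendsto_const_nhds hcard_tendsto
      simpa using (tendsto_const_nhds (x := (1:ℝ))).sub this
    exact tendsto_of_tendsto_of_tendsto_of_le_of_le hlim tendsto_const_nhds hlb hub
end
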